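/- arXiv:2105.07684 — 3 statements merged into one kernel-verified Lean document; each statement's English description precedes it below -/
import Mathlib

section
/- (Pierce's Lemma.) For every dimension d ≥ 1 and all p, η > 0 there exists a finite constant κ_{d,p,η} such that for every ℝ^d-valued random vector X on any probability space and every N ≥ 1: e_{p,N}(X) ≤ κ_{d,p,η} · σ_{p+η}(X) · N^{−1/d}. -/
open MeasureTheory Real

noncomputable section

abbrev Euc (d : ℕ) : Type := EuclideanSpace ℝ (Fin d)

/-- L^p quantization error of a random vector `X` w.r.t. a grid `Γ`:
`e_p(Γ,X) = (E[dist(X,Γ)^p])^{1/p}`. -/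
def quantErrRV (p : ℝ) {Ω : Type*} [MeasurableSpace Ω] (P : Measure Ω) {d : ℕ}
    (X : Ω → Euc d) (Γ : Finset (Euc d)) : ℝ :=
  (∫ ω, (Metric.infDist (X ω) (Γ : Set (Euc d))) ^ p ∂P) ^ (1 / p)

/-- Optimal L^p quantization error at level `N`:
`e_{p,N}(X) = inf {e_p(Γ,X) : Γ nonempty finite, card Γ ≤ N}`. -/
def optQuantErrRV (p : ℝ) (N : ℕ) {Ω : Type*} [MeasurableSpace Ω] (P : Measure Ω) {d : ℕ}
    (X : Ω → Euc d) : ℝ :=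
  sInf {e | ∃ Γ : Finset (Euc d), Γ.Nonempty ∧ Γ.card ≤ N ∧ e = quantErrRV p P X Γ}

/-- `σ_p(X) = inf_{a∈ℝ^d} (E|X−a|^p)^{1/p}`, the L^p pseudo-standard deviation. -/
def sigmaRV (p : ℝ) {Ω : Type*} [MeasurableSpace Ω] (P : Measure Ω) {d : ℕ}
    (X : Ω → Euc d) : ℝ :=
  ⨅ a : Euc d, (∫ ω, ‖X ω - a‖ ^ p ∂P) ^ (1 / p)

set_option maxHeartbeats 1000000

/-- helper: (s+t)^q ≤ 2^q (s^q + t^q) for rpow -/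
lemma rpow_add_le_two_rpow (q s t : ℝ) (hq : 0 ≤ q) (hs : 0 ≤ s) (ht : 0 ≤ t) :
    (s + t) ^ q ≤ 2 ^ q * (s ^ q + t ^ q) := by
  have h1 : s + t ≤ 2 * max s t := by
    rcases le_total s t with h | h
    · simp [max_eq_right h]; linarith
    · simp [max_eq_left h]; linarith
  have h2 : (s + t) ^ q ≤ (2 * max s t) ^ q :=
    rpow_le_rpow (by linarith) h1 hq
  have h3 : (2 * max s t) ^ q = 2 ^ q * (max s t) ^ q :=
    mul_rpow (by norm_num) (le_max_of_le_left hs)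
  have h4 : (max s t) ^ q ≤ s ^ q + t ^ q := by
    rcases le_total s t with h | h
    · rw [max_eq_right h]
      have := rpow_nonneg hs q; linarith
    · rw [max_eq_left h]
      have := rpow_nonneg ht q; linarith
  calc (s + t) ^ q ≤ 2 ^ q * (max s t) ^ q := by rw [← h3]; exact h2
    _ ≤ 2 ^ q * (s ^ q + t ^ q) := by
        have : (0:ℝ) ≤ (2:ℝ) ^ q := rpow_nonneg (by norm_num) q
        nlinarith

/-- helper: (x+1)^d ≤ 2^d (x^d + 1) for nat pow -/
lemma add_one_pow_le (x : ℝ) (hx : 0 ≤ x) (d : ℕ) :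
    (x + 1) ^ d ≤ 2 ^ d * (x ^ d + 1) := by
  have h1 : x + 1 ≤ 2 * max x 1 := by
    rcases le_total x 1 with h | h
    · simp [max_eq_right h]; linarith
    · simp [max_eq_left h]; linarith
  have h2 : (x + 1) ^ d ≤ (2 * max x 1) ^ d := pow_le_pow_left₀ (by linarith) h1 d
  have h3 : (2 * max x 1) ^ d = 2 ^ d * (max x 1) ^ d := mul_pow 2 _ d
  have h4 : (max x 1) ^ d ≤ x ^ d + 1 := by
    rcases le_total x 1 with h | h
    · rw [max_eq_right h]
      have := pow_nonneg hx d; simp; nlinarith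
    · rw [max_eq_left h]
      have : (1:ℝ) ≤ x ^ d := one_le_pow₀ h
      linarith
  calc (x + 1) ^ d ≤ 2 ^ d * (max x 1) ^ d := h3 ▸ h2
    _ ≤ 2 ^ d * (x ^ d + 1) := by
        have : (0:ℝ) ≤ (2:ℝ) ^ d := by positivity
        nlinarith

/-- helper: t^p ≤ 1 + t^(p+η) -/
lemma rpow_le_one_add (t p η : ℝ) (ht : 0 ≤ t) (hp : 0 < p) (hη : 0 ≤ η) :
    t ^ p ≤ 1 + t ^ (p + η) := by
  rcases le_total t 1 with h | h
  · have h1 : t ^ p ≤ 1 := rpow_le_one ht h hp.le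
    have h2 : (0:ℝ) ≤ t ^ (p + η) := rpow_nonneg ht _
    linarith
  · have h1 : t ^ p ≤ t ^ (p + η) := rpow_le_rpow_of_exponent_le h (by linarith)
    linarith

/-- 1-d grid point selection -/
lemma one_dim_grid (R : ℝ) (hR : 0 < R) (m : ℕ) (hm : 1 ≤ m) (t : ℝ) (h : |t| ≤ R) :
    ∃ j : Fin m, |t - (-R + R * (2 * (j:ℝ) + 1) / m)| ≤ R / m := by
  have hm' : (0:ℝ) < m := by exact_mod_cast hm
  set u : ℝ := (t + R) * m / (2 * R) with hu
  have hu0 : 0 ≤ u := by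
    apply div_nonneg
    · have := abs_le.mp h
      nlinarith
    · linarith
  have hum : u ≤ m := by
    rw [hu, div_le_iff₀ (by linarith)]
    have := abs_le.mp h
    nlinarith
  have hlt : min (m - 1) ⌊u⌋₊ < m := lt_of_le_of_lt (min_le_left _ _) (by omega)
  refine ⟨⟨min (m - 1) ⌊u⌋₊, hlt⟩, ?_⟩
  set j : ℕ := min (m - 1) ⌊u⌋₊ with hj
  have h1 : (j:ℝ) ≤ u := by
    rcases le_or_gt ⌊u⌋₊ (m-1) with hc | hc
    · rw [hj, min_eq_right hc]
      exact Nat.floor_le hu0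
    · rw [hj, min_eq_left hc.le]
      have h2 : ((m-1:ℕ):ℝ) < (⌊u⌋₊:ℝ) := by exact_mod_cast hc
      have h3 : (⌊u⌋₊:ℝ) ≤ u := Nat.floor_le hu0
      linarith
  have h2 : u ≤ (j:ℝ) + 1 := by
    rcases le_or_gt ⌊u⌋₊ (m-1) with hc | hc
    · rw [hj, min_eq_right hc]
      exact (Nat.lt_floor_add_one u).le
    · rw [hj, min_eq_left hc.le]
      have : ((m-1:ℕ):ℝ) + 1 = m := by
        have : 1 ≤ m := hm
        push_cast [Nat.cast_sub this]
        ring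
      rw [this]; exact hum
  -- now clear denominators
  have h1' : 2 * R * (j:ℝ) ≤ (t + R) * m := by
    rw [hu] at h1
    rw [← sub_nonneg]
    have := (le_div_iff₀ (by linarith : (0:ℝ) < 2 * R)).mp h1
    linarith
  have h2' : (t + R) * m ≤ 2 * R * ((j:ℝ) + 1) := by
    rw [hu] at h2
    have := (div_le_iff₀ (by linarith : (0:ℝ) < 2 * R)).mp h2
    linarith
  have key : t - (-R + R * (2 * (j:ℝ) + 1) / m) = (t * m + R * m - R * (2 * j + 1)) / m := by
    field_simp
    ring
  rw [key, abs_div, abs_of_pos hm', div_le_div_iff_of_pos_right hm', abs_le]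
  constructor <;> nlinarith

/-- cube grid: m^d points covering the sup-ball of radius R with resolution √d R/m -/
lemma cube_grid (d : ℕ) (R : ℝ) (hR : 0 < R) (m : ℕ) (hm : 1 ≤ m) :
    ∃ G : Finset (Euc d), G.card ≤ m ^ d ∧
      ∀ z : Euc d, (∀ i, |z i| ≤ R) → ∃ g ∈ G, dist z g ≤ Real.sqrt d * (R / m) := by
  classical
  haveI : NeZero m := ⟨by omega⟩
  set pts : Fin m → ℝ := fun j => -R + R * (2 * (j:ℝ) + 1) / m with hpts
  set G : Finset (Euc d) := (Finset.univ : Finset (Fin d → Fin m)).image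
    (fun f => (WithLp.equiv 2 (Fin d → ℝ)).symm (fun i => pts (f i))) with hG
  refine ⟨G, ?_, ?_⟩
  · calc G.card ≤ (Finset.univ : Finset (Fin d → Fin m)).card := Finset.card_image_le
      _ = m ^ d := by simp [Finset.card_univ]
  · intro z hz
    have hsel : ∀ i : Fin d, ∃ j : Fin m, |z i - pts j| ≤ R / m := fun i =>
      one_dim_grid R hR m hm (z i) (hz i)
    choose f hf using hsel
    refine ⟨(WithLp.equiv 2 (Fin d → ℝ)).symm (fun i => pts (f i)),
      Finset.mem_image.mpr ⟨f, Finset.mem_univ f, rfl⟩, ?_⟩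
    rw [EuclideanSpace.dist_eq]
    have hstep : ∀ i : Fin d,
        dist (z i) (((WithLp.equiv 2 (Fin d → ℝ)).symm (fun i => pts (f i))) i) ^ 2
          ≤ (R / m) ^ 2 := by
      intro i
      rw [show ((WithLp.equiv 2 (Fin d → ℝ)).symm (fun i => pts (f i))) i = pts (f i) from rfl, Real.dist_eq]
      have := hf i
      have habs : (0:ℝ) ≤ |z i - pts (f i)| := abs_nonneg _
      nlinarith
    calc Real.sqrt (∑ i, dist (z i) (((WithLp.equiv 2 (Fin d → ℝ)).symm (fun i => pts (f i))) i) ^ 2)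
        ≤ Real.sqrt (∑ _i : Fin d, (R / m) ^ 2) :=
          Real.sqrt_le_sqrt (Finset.sum_le_sum (fun i _ => hstep i))
      _ = Real.sqrt d * (R / m) := by
          rw [Finset.sum_const, Finset.card_univ, Fintype.card_fin, nsmul_eq_mul,
            Real.sqrt_mul (by positivity), Real.sqrt_sq (by positivity)]

/-- coordinate bound -/
lemma coord_le_norm {d : ℕ} (z : Euc d) (i : Fin d) : |z i| ≤ ‖z‖ := by
  rw [EuclideanSpace.norm_eq]
  have h1 : |z i| = Real.sqrt (‖z i‖ ^ 2) := by
    rw [Real.sqrt_sq_eq_abs, Real.norm_eq_abs, abs_abs]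
  rw [h1]
  apply Real.sqrt_le_sqrt
  exact Finset.single_le_sum (f := fun j => ‖z j‖ ^ 2) (fun j _ => by positivity)
    (Finset.mem_univ i)

/-- shell grid lemma -/
lemma shell_grid (d : ℕ) (hd : 1 ≤ d) (τ : ℝ) (hτ : 0 < τ) :
    ∃ C : ℝ, 1 ≤ C ∧ ∀ n : ℕ, 1 ≤ n → ∃ G : Finset (Euc d), G.Nonempty ∧
      (G.card : ℝ) ≤ C * (n:ℝ) ^ d ∧
      ∀ z : Euc d, ∃ g ∈ G, dist z g ≤ (2 * d / n) * (1 + ‖z‖ ^ (1 + τ)) := by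
  classical
  have hd' : (1:ℝ) ≤ d := by exact_mod_cast hd
  set r : ℝ := (2:ℝ) ^ (-(τ * d)) with hr
  have hr0 : 0 < r := rpow_pos_of_pos (by norm_num) _
  have hr1 : r < 1 := rpow_lt_one_of_one_lt_of_neg (by norm_num) (neg_lt_zero.mpr (mul_pos hτ (by linarith)))
  set C : ℝ := 1 + 2 ^ d * ((2:ℝ) ^ (τ * d) / (1 - r) + (1 / τ + 2)) with hC
  have hCpos : 1 ≤ C := by
    have h1 : (0:ℝ) < 2 ^ d := by positivity
    have h2 : (0:ℝ) ≤ (2:ℝ) ^ (τ * d) / (1 - r) := by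
      apply div_nonneg (rpow_nonneg (by norm_num) _); linarith
    have h3 : (0:ℝ) < 1 / τ := one_div_pos.mpr hτ
    have h4 : (0:ℝ) ≤ 2 ^ d * ((2:ℝ) ^ (τ * (d:ℝ)) / (1 - r) + (1 / τ + 2)) :=
      mul_nonneg h1.le (by linarith)
    rw [hC]; linarith
  refine ⟨C, hCpos, ?_⟩
  intro n hn
  have hn' : (1:ℝ) ≤ n := by exact_mod_cast hn
  have hn0 : (0:ℝ) < n := by linarith
  set K : ℕ := ⌈Real.logb 2 n / τ⌉₊ with hK
  set m : ℕ → ℕ := fun k => ⌈(n:ℝ) * (2:ℝ) ^ ((1 - (k:ℝ)) * τ)⌉₊ with hm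
  have hm1 : ∀ k, 1 ≤ m k := by
    intro k
    rw [hm]
    exact Nat.one_le_ceil_iff.mpr (by positivity)
  have hmge : ∀ k : ℕ, (n:ℝ) * (2:ℝ) ^ ((1 - (k:ℝ)) * τ) ≤ (m k : ℝ) := fun k => Nat.le_ceil _
  have hR : ∀ k : ℕ, (0:ℝ) < (2:ℝ) ^ (k:ℝ) := fun k => rpow_pos_of_pos (by norm_num) _
  choose Gk hGkcard hGkcov using fun k : ℕ => cube_grid d ((2:ℝ)^(k:ℝ)) (hR k) (m k) (hm1 k)
  set G : Finset (Euc d) := insert 0 ((Finset.range (K+1)).biUnion Gk) with hG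
  have hsqrtd : Real.sqrt d ≤ d := by
    calc Real.sqrt d ≤ Real.sqrt ((d:ℝ)^2) := Real.sqrt_le_sqrt (by nlinarith)
      _ = d := Real.sqrt_sq (by positivity)
  refine ⟨G, ⟨0, Finset.mem_insert_self _ _⟩, ?_, ?_⟩
  · -- cardinality
    have hstep : ∀ k : ℕ, ((m k : ℝ)) ^ d ≤ 2 ^ d * ((n:ℝ) ^ d * ((2:ℝ)^(τ*d) * r ^ k) + 1) := by
      intro k
      have hx : (0:ℝ) ≤ (n:ℝ) * (2:ℝ) ^ ((1 - (k:ℝ)) * τ) := by positivity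
      have h1 : (m k : ℝ) ≤ (n:ℝ) * (2:ℝ) ^ ((1 - (k:ℝ)) * τ) + 1 :=
        (Nat.ceil_lt_add_one hx).le
      have h2 : ((m k : ℝ)) ^ d ≤ ((n:ℝ) * (2:ℝ) ^ ((1 - (k:ℝ)) * τ) + 1) ^ d :=
        pow_le_pow_left₀ (by positivity) h1 d
      have h3 := add_one_pow_le _ hx d
      have h4 : ((n:ℝ) * (2:ℝ) ^ ((1 - (k:ℝ)) * τ)) ^ d
          = (n:ℝ) ^ d * ((2:ℝ)^(τ*d) * r ^ k) := by
        rw [mul_pow, ← rpow_natCast ((2:ℝ) ^ ((1 - (k:ℝ)) * τ)) d, ← rpow_mul (by norm_num),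
          hr, ← rpow_natCast ((2:ℝ) ^ (-(τ * (d:ℝ)))) k, ← rpow_mul (by norm_num),
          ← rpow_add (by norm_num)]
        ring_nf
      rw [h4] at h3
      linarith
    have hsum : ∑ k ∈ Finset.range (K+1), ((m k:ℝ)) ^ d
        ≤ 2 ^ d * ((n:ℝ) ^ d * ((2:ℝ)^(τ*(d:ℝ)) / (1 - r)) + ((K:ℝ)+1)) := by
      have hgeom : ∑ k ∈ Finset.range (K+1), r ^ k ≤ 1 / (1 - r) := by
        rw [geom_sum_eq hr1.ne (K+1)]
        have he : (r^(K+1) - 1)/(r - 1) = (1 - r^(K+1))/(1 - r) := by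
          rw [← neg_div_neg_eq]; ring_nf
        rw [he]
        gcongr
        · have : (0:ℝ) ≤ r^(K+1) := pow_nonneg hr0.le _
          linarith
      calc ∑ k ∈ Finset.range (K+1), ((m k:ℝ)) ^ d
          ≤ ∑ k ∈ Finset.range (K+1), 2 ^ d * ((n:ℝ) ^ d * ((2:ℝ)^(τ*(d:ℝ)) * r ^ k) + 1) :=
            Finset.sum_le_sum (fun k _ => hstep k)
        _ = 2 ^ d * ((n:ℝ) ^ d * ((2:ℝ)^(τ*(d:ℝ)) * ∑ k ∈ Finset.range (K+1), r ^ k) + ((K:ℝ)+1)) := by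
            have hterm : ∀ k ∈ Finset.range (K+1),
                2 ^ d * ((n:ℝ) ^ d * ((2:ℝ)^(τ*(d:ℝ)) * r ^ k) + 1)
                  = (2 ^ d * (n:ℝ) ^ d * (2:ℝ)^(τ*(d:ℝ))) * r ^ k + 2 ^ d := by
              intro k _; ring
            rw [Finset.sum_congr rfl hterm, Finset.sum_add_distrib, ← Finset.mul_sum,
              Finset.sum_const, Finset.card_range, nsmul_eq_mul]
            push_cast; ring
        _ ≤ 2 ^ d * ((n:ℝ) ^ d * ((2:ℝ)^(τ*(d:ℝ)) / (1 - r)) + ((K:ℝ)+1)) := by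
            have h1 : (0:ℝ) < 2 ^ d := by positivity
            have h2 : (0:ℝ) ≤ (n:ℝ) ^ d := by positivity
            have h3 : (0:ℝ) ≤ (2:ℝ)^(τ*(d:ℝ)) := rpow_nonneg (by norm_num) _
            have h4 : (2:ℝ)^(τ*(d:ℝ)) * ∑ k ∈ Finset.range (K+1), r ^ k
                ≤ (2:ℝ)^(τ*(d:ℝ)) / (1 - r) := by
              rw [div_eq_mul_inv, ← one_div]
              exact mul_le_mul_of_nonneg_left hgeom h3
            nlinarith [mul_le_mul_of_nonneg_left h4 h2]
    have hK1 : (K:ℝ) + 1 ≤ (1/τ + 2) * (n:ℝ)^d := by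
      have ha : (0:ℝ) ≤ Real.logb 2 n := Real.logb_nonneg (by norm_num) hn'
      have hb : (K:ℝ) < Real.logb 2 n / τ + 1 := Nat.ceil_lt_add_one (div_nonneg ha hτ.le)
      have hc : Real.logb 2 n ≤ n := by
        have h1 : (n:ℝ) ≤ (2:ℝ)^((n:ℕ):ℝ) := by
          rw [rpow_natCast]
          exact_mod_cast (Nat.lt_two_pow_self (n := n)).le
        calc Real.logb 2 n ≤ Real.logb 2 ((2:ℝ)^((n:ℕ):ℝ)) :=
              (Real.logb_le_logb (by norm_num) hn0 (by positivity)).mpr h1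
          _ = n := Real.logb_rpow (by norm_num) (by norm_num)
      have hd2 : (n:ℝ) ≤ (n:ℝ)^d := le_self_pow₀ hn' (by omega)
      have hone : (1:ℝ) ≤ (n:ℝ)^d := one_le_pow₀ hn'
      have hτ' : (0:ℝ) < 1/τ := by positivity
      have : Real.logb 2 n / τ ≤ (1/τ) * (n:ℝ)^d := by
        rw [div_eq_mul_inv, mul_comm]
        have : Real.logb 2 n ≤ (n:ℝ)^d := hc.trans hd2
        calc τ⁻¹ * Real.logb 2 n ≤ τ⁻¹ * (n:ℝ)^d :=
              mul_le_mul_of_nonneg_left this (by positivity)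
          _ = (1/τ) * (n:ℝ)^d := by rw [one_div]
      nlinarith
    have hcard1 : (G.card : ℝ) ≤ 1 + ∑ k ∈ Finset.range (K+1), ((m k:ℝ)) ^ d := by
      have h1 : G.card ≤ 1 + ∑ k ∈ Finset.range (K+1), (m k) ^ d := by
        calc G.card ≤ ((Finset.range (K+1)).biUnion Gk).card + 1 := Finset.card_insert_le _ _
          _ ≤ (∑ k ∈ Finset.range (K+1), (Gk k).card) + 1 := by
              have := Finset.card_biUnion_le (s := Finset.range (K+1)) (t := Gk)
              omega
          _ ≤ (∑ k ∈ Finset.range (K+1), (m k) ^ d) + 1 := by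
              have := Finset.sum_le_sum (fun k (_ : k ∈ Finset.range (K+1)) => hGkcard k)
              omega
          _ = 1 + ∑ k ∈ Finset.range (K+1), (m k) ^ d := by omega
      calc (G.card : ℝ) ≤ ((1 + ∑ k ∈ Finset.range (K+1), (m k) ^ d : ℕ) : ℝ) := by
            exact_mod_cast h1
        _ = 1 + ∑ k ∈ Finset.range (K+1), ((m k:ℝ)) ^ d := by push_cast; ring
    have hone : (1:ℝ) ≤ (n:ℝ)^d := one_le_pow₀ hn'
    have h2d : (0:ℝ) < 2^d := by positivity
    have hfrac : (0:ℝ) ≤ (2:ℝ)^(τ*(d:ℝ)) / (1 - r) :=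
      div_nonneg (rpow_nonneg (by norm_num) _) (by linarith)
    calc (G.card : ℝ) ≤ 1 + ∑ k ∈ Finset.range (K+1), ((m k:ℝ)) ^ d := hcard1
      _ ≤ 1 + 2 ^ d * ((n:ℝ) ^ d * ((2:ℝ)^(τ*(d:ℝ)) / (1 - r)) + ((K:ℝ)+1)) := by linarith
      _ ≤ (n:ℝ)^d + 2 ^ d * ((n:ℝ) ^ d * ((2:ℝ)^(τ*(d:ℝ)) / (1 - r)) + (1/τ + 2) * (n:ℝ)^d) := by
          nlinarith
      _ = C * (n:ℝ)^d := by rw [hC]; ring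
  · -- coverage
    intro z
    have hnorm0 : (0:ℝ) ≤ ‖z‖ := norm_nonneg z
    have h2d0 : (0:ℝ) < 2 * d / n := by
      apply div_pos (by linarith) hn0
    have hzpow : (0:ℝ) ≤ ‖z‖ ^ (1+τ) := rpow_nonneg hnorm0 _
    rcases le_or_gt ‖z‖ 1 with hz1 | hz1
    · -- small z: shell 0
      obtain ⟨g, hgmem, hgdist⟩ := hGkcov 0 z (fun i => by
        have := coord_le_norm z i
        simpa using this.trans hz1)
      refine ⟨g, Finset.mem_insert_of_mem (Finset.mem_biUnion.mpr
        ⟨0, Finset.mem_range.mpr (by omega), hgmem⟩), ?_⟩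
      have hm0 : (n:ℝ) ≤ (m 0 : ℝ) := by
        have := hmge 0
        have h1 : (1:ℝ) ≤ (2:ℝ) ^ ((1 - ((0:ℕ):ℝ)) * τ) := by
          apply one_le_rpow (by norm_num)
          push_cast; nlinarith
        nlinarith
      have hb : Real.sqrt d * ((2:ℝ)^((0:ℕ):ℝ) / (m 0 : ℝ)) ≤ (d:ℝ) / n := by
        have h1 : (2:ℝ)^((0:ℕ):ℝ) = 1 := by norm_num
        rw [h1]
        have hm0' : (0:ℝ) < (m 0 : ℝ) := by exact_mod_cast hm1 0
        have h2 : 1 / (m 0 : ℝ) ≤ 1 / (n:ℝ) := by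
          apply one_div_le_one_div_of_le hn0 hm0
        calc Real.sqrt d * (1 / (m 0:ℝ)) ≤ (d:ℝ) * (1 / (n:ℝ)) := by
              apply mul_le_mul hsqrtd h2 (by positivity) (by positivity)
          _ = (d:ℝ) / n := by ring
      calc dist z g ≤ (d:ℝ)/n := hgdist.trans hb
        _ ≤ (2 * d / n) * (1 + ‖z‖ ^ (1+τ)) := by
            have hdx : (d:ℝ) ≤ 2 * d * (1 + ‖z‖ ^ (1+τ)) := by nlinarith
            rw [div_mul_eq_mul_div, div_le_div_iff₀ hn0 hn0]
            nlinarith [mul_le_mul_of_nonneg_right hdx hn0.le]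
    · -- large z
      set k0 : ℕ := ⌈Real.logb 2 ‖z‖⌉₊ with hk0
      have hlogpos : 0 < Real.logb 2 ‖z‖ := Real.logb_pos (by norm_num) hz1
      have hzk : ‖z‖ ≤ (2:ℝ) ^ (k0:ℝ) := by
        calc ‖z‖ = (2:ℝ) ^ (Real.logb 2 ‖z‖) := (Real.rpow_logb (by norm_num) (by norm_num) (by linarith)).symm
          _ ≤ (2:ℝ) ^ (k0:ℝ) := rpow_le_rpow_of_exponent_le (by norm_num) (Nat.le_ceil _)
      rcases le_or_gt k0 K with hkK | hkK
      · -- shell k0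
        obtain ⟨g, hgmem, hgdist⟩ := hGkcov k0 z (fun i => (coord_le_norm z i).trans hzk)
        refine ⟨g, Finset.mem_insert_of_mem (Finset.mem_biUnion.mpr
          ⟨k0, Finset.mem_range.mpr (by omega), hgmem⟩), ?_⟩
        have hzlow : (2:ℝ) ^ ((k0:ℝ) - 1) ≤ ‖z‖ := by
          have h1 : (k0:ℝ) - 1 < Real.logb 2 ‖z‖ := by
            have := Nat.ceil_lt_add_one hlogpos.le
            linarith
          calc (2:ℝ) ^ ((k0:ℝ) - 1) ≤ (2:ℝ) ^ (Real.logb 2 ‖z‖) :=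
                rpow_le_rpow_of_exponent_le (by norm_num) h1.le
            _ = ‖z‖ := Real.rpow_logb (by norm_num) (by norm_num) (by linarith)
        have hmk : (n:ℝ) * (2:ℝ) ^ ((1 - (k0:ℝ)) * τ) ≤ (m k0 : ℝ) := hmge k0
        have hmk0 : (0:ℝ) < (m k0 : ℝ) := by exact_mod_cast hm1 k0
        have hbound : (2:ℝ)^(k0:ℝ) / (m k0 : ℝ) ≤ 2 * (2:ℝ)^(((k0:ℝ)-1)*(1+τ)) / n := by
          rw [div_le_div_iff₀ hmk0 hn0]
          have e1 : (2:ℝ) * (2:ℝ)^(((k0:ℝ)-1)*(1+τ)) * (2:ℝ)^((1-(k0:ℝ))*τ) = (2:ℝ)^(k0:ℝ) := by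
            have e2 : (2:ℝ) * (2:ℝ)^(((k0:ℝ)-1)*(1+τ)) = (2:ℝ)^(1 + ((k0:ℝ)-1)*(1+τ)) := by
              rw [rpow_add (by norm_num : (0:ℝ) < 2), Real.rpow_one]
            rw [e2, ← rpow_add (by norm_num : (0:ℝ) < 2)]
            congr 1
            ring
          have h1 : (2 * (2:ℝ)^(((k0:ℝ)-1)*(1+τ))) * ((n:ℝ) * (2:ℝ)^((1-(k0:ℝ))*τ))
              = (2:ℝ)^(k0:ℝ) * n := by
            calc (2 * (2:ℝ)^(((k0:ℝ)-1)*(1+τ))) * ((n:ℝ) * (2:ℝ)^((1-(k0:ℝ))*τ))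
                = (2 * (2:ℝ)^(((k0:ℝ)-1)*(1+τ)) * (2:ℝ)^((1-(k0:ℝ))*τ)) * n := by ring
              _ = (2:ℝ)^(k0:ℝ) * n := by rw [e1]
          rw [← h1]
          exact mul_le_mul_of_nonneg_left hmk (by positivity)
        have hzup : (2:ℝ)^(((k0:ℝ)-1)*(1+τ)) ≤ ‖z‖ ^ (1+τ) := by
          rw [Real.rpow_mul (by norm_num : (0:ℝ) ≤ 2)]
          exact rpow_le_rpow (by positivity) hzlow (by linarith)
        calc dist z g ≤ Real.sqrt d * ((2:ℝ)^(k0:ℝ) / (m k0:ℝ)) := hgdist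
          _ ≤ (d:ℝ) * (2 * (2:ℝ)^(((k0:ℝ)-1)*(1+τ)) / n) := by
              apply mul_le_mul hsqrtd hbound (by positivity) (by positivity)
          _ = (2 * d / n) * (2:ℝ)^(((k0:ℝ)-1)*(1+τ)) := by ring
          _ ≤ (2 * d / n) * (1 + ‖z‖ ^ (1+τ)) := by
              apply mul_le_mul_of_nonneg_left ?_ h2d0.le
              linarith
      · -- far tail: use 0
        refine ⟨0, Finset.mem_insert_self _ _, ?_⟩
        have h1 : (K:ℝ) < Real.logb 2 ‖z‖ := by
          by_contra hcon
          push_neg at hcon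
          exact absurd (Nat.ceil_le.mpr hcon) (by omega)
        have h2 : Real.logb 2 (n:ℝ) / τ ≤ (K:ℝ) := Nat.le_ceil _
        have hzτ : (n:ℝ) ≤ ‖z‖ ^ τ := by
          have h3 : Real.logb 2 (n:ℝ) ≤ τ * (K:ℝ) := by
            rw [div_le_iff₀ hτ] at h2
            linarith
          calc (n:ℝ) = (2:ℝ) ^ (Real.logb 2 (n:ℝ)) :=
                (Real.rpow_logb (by norm_num) (by norm_num) hn0).symm
            _ ≤ (2:ℝ) ^ (τ * Real.logb 2 ‖z‖) := by
                apply rpow_le_rpow_of_exponent_le (by norm_num)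
                nlinarith
            _ = ((2:ℝ) ^ (Real.logb 2 ‖z‖)) ^ τ := by
                rw [← rpow_mul (by norm_num)]; ring_nf
            _ = ‖z‖ ^ τ := by
                rw [Real.rpow_logb (by norm_num) (by norm_num) (by linarith)]
        have hmul : ‖z‖ * (n:ℝ) ≤ ‖z‖ ^ (1+τ) := by
          calc ‖z‖ * (n:ℝ) ≤ ‖z‖ * ‖z‖ ^ τ := mul_le_mul_of_nonneg_left hzτ hnorm0
            _ = ‖z‖ ^ (1+τ) := by
              rw [rpow_add (by linarith : (0:ℝ) < ‖z‖), Real.rpow_one]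
        rw [dist_zero_right]
        calc ‖z‖ ≤ ‖z‖ ^ (1+τ) / n := (le_div_iff₀ hn0).mpr hmul
          _ ≤ (2 * d / n) * (1 + ‖z‖ ^ (1+τ)) := by
              rw [div_mul_eq_mul_div, div_le_div_iff₀ hn0 hn0]
              have : ‖z‖ ^ (1+τ) ≤ 2 * (d:ℝ) * (1 + ‖z‖ ^ (1+τ)) := by nlinarith
              nlinarith

lemma optQuant_le (p : ℝ) (N : ℕ) {Ω : Type*} [MeasurableSpace Ω] (P : Measure Ω) {d : ℕ}
    (X : Ω → Euc d) (Γ : Finset (Euc d)) (hne : Γ.Nonempty) (hcard : Γ.card ≤ N) :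
    optQuantErrRV p N P X ≤ quantErrRV p P X Γ := by
  apply csInf_le
  · refine ⟨0, ?_⟩
    rintro e ⟨Γ', -, -, rfl⟩
    exact rpow_nonneg (integral_nonneg fun ω => rpow_nonneg Metric.infDist_nonneg _) _
  · exact ⟨Γ, hne, hcard, rfl⟩

lemma integrable_shift {Ω : Type*} [MeasurableSpace Ω] (P : Measure Ω) [IsProbabilityMeasure P]
    {d : ℕ} (X : Ω → Euc d) (hX : Measurable X) (q : ℝ) (hq : 0 < q)
    (hint : Integrable (fun ω => ‖X ω‖ ^ q) P) (a : Euc d) :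
    Integrable (fun ω => ‖X ω - a‖ ^ q) P := by
  have hmeas : AEStronglyMeasurable (fun ω => ‖X ω - a‖ ^ q) P :=
    (((Real.continuous_rpow_const hq.le).measurable).comp
      ((hX.sub measurable_const).norm)).aestronglyMeasurable
  apply Integrable.mono (g := fun ω => 2 ^ q * (‖X ω‖ ^ q + ‖a‖ ^ q))
    (((hint.add (integrable_const _)).const_mul _)) hmeas
  filter_upwards with ω
  have h0 : (0:ℝ) ≤ ‖X ω - a‖ ^ q := rpow_nonneg (norm_nonneg _) _
  have h1 : ‖X ω - a‖ ≤ ‖X ω‖ + ‖a‖ := norm_sub_le _ _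
  have h2 : ‖X ω - a‖ ^ q ≤ (‖X ω‖ + ‖a‖) ^ q := rpow_le_rpow (norm_nonneg _) h1 hq.le
  have h3 := rpow_add_le_two_rpow q ‖X ω‖ ‖a‖ hq.le (norm_nonneg _) (norm_nonneg _)
  have h4 : (0:ℝ) ≤ 2 ^ q * (‖X ω‖ ^ q + ‖a‖ ^ q) := by
    have := rpow_nonneg (norm_nonneg (X ω)) q
    have := rpow_nonneg (norm_nonneg a) q
    have := rpow_nonneg (by norm_num : (0:ℝ) ≤ 2) q
    positivity
  rw [Real.norm_eq_abs, Real.norm_eq_abs, abs_of_nonneg h0, abs_of_nonneg h4]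
  linarith

section MeasPart

variable {Ω : Type} [MeasurableSpace Ω] (P : Measure Ω) [IsProbabilityMeasure P] {d : ℕ}

lemma integral_one_add (X : Ω → Euc d) (a : Euc d) (q : ℝ)
    (hintq : Integrable (fun ω => ‖X ω - a‖ ^ q) P)
    (I : ℝ) (hIdef : I = ∫ ω, ‖X ω - a‖ ^ q ∂P) (hIpos : 0 < I) :
    ∫ ω, (1 + I⁻¹ * ‖X ω - a‖ ^ q) ∂P = 2 := by
  rw [integral_add (integrable_const _) (hintq.const_mul _), integral_const, integral_const_mul,
    ← hIdef]
  simp [inv_mul_cancel₀ hIpos.ne']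
  norm_num

lemma quant_singleton_zero (p q : ℝ) (hp : 0 < p) (hq : 0 < q) (X : Ω → Euc d) (a : Euc d)
    (hintq : Integrable (fun ω => ‖X ω - a‖ ^ q) P)
    (hIzero : ∫ ω, ‖X ω - a‖ ^ q ∂P = 0) :
    quantErrRV p P X {a} = 0 := by
  have hae : ∀ᵐ ω ∂P, ‖X ω - a‖ ^ q = 0 :=
    (integral_eq_zero_iff_of_nonneg (fun ω => rpow_nonneg (norm_nonneg _) _) hintq).mp hIzero
  have hae2 : ∀ᵐ ω ∂P, (Metric.infDist (X ω) (({a} : Finset (Euc d)) : Set (Euc d))) ^ p = 0 := by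
    filter_upwards [hae] with ω hω
    have h1 : ‖X ω - a‖ = 0 := ((Real.rpow_eq_zero (norm_nonneg _) hq.ne').mp hω)
    simp only [Finset.coe_singleton, Metric.infDist_singleton, dist_eq_norm, h1]
    exact Real.zero_rpow hp.ne'
  have hz : ∫ ω, (Metric.infDist (X ω) (({a} : Finset (Euc d)) : Set (Euc d))) ^ p ∂P = 0 := by
    rw [integral_congr_ae hae2, integral_zero]
  rw [quantErrRV, hz, Real.zero_rpow (by positivity)]

lemma quant_singleton_le (p η : ℝ) (hp : 0 < p) (hη : 0 < η) (X : Ω → Euc d) (a : Euc d)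
    (hintq : Integrable (fun ω => ‖X ω - a‖ ^ (p + η)) P)
    (I M : ℝ) (hIdef : I = ∫ ω, ‖X ω - a‖ ^ (p + η) ∂P) (hIpos : 0 < I)
    (hMdef : M = I ^ (1/(p+η))) :
    quantErrRV p P X {a} ≤ M * 2 ^ (1/p) := by
  have hM0 : 0 < M := hMdef ▸ rpow_pos_of_pos hIpos _
  have hMq : M ^ (p + η) = I := by
    rw [hMdef, ← Real.rpow_mul hIpos.le, one_div, inv_mul_cancel₀ (by positivity), Real.rpow_one]
  have hpt : ∀ ω, (Metric.infDist (X ω) (({a} : Finset (Euc d)) : Set (Euc d))) ^ p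
      ≤ M ^ p * (1 + I⁻¹ * ‖X ω - a‖ ^ (p + η)) := by
    intro ω
    have h1 : Metric.infDist (X ω) (({a} : Finset (Euc d)) : Set (Euc d)) = ‖X ω - a‖ := by
      simp [Metric.infDist_singleton, dist_eq_norm]
    rw [h1]
    have ht0 : (0:ℝ) ≤ ‖X ω - a‖ / M := div_nonneg (norm_nonneg _) hM0.le
    have h3 := rpow_le_one_add (‖X ω - a‖ / M) p η ht0 hp hη.le
    have h4 : ‖X ω - a‖ ^ p = M ^ p * (‖X ω - a‖ / M) ^ p := by
      rw [← mul_rpow hM0.le ht0, mul_div_cancel₀ _ hM0.ne']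
    have h5 : (‖X ω - a‖ / M) ^ (p + η) = I⁻¹ * ‖X ω - a‖ ^ (p + η) := by
      rw [div_rpow (norm_nonneg _) hM0.le, hMq, div_eq_mul_inv, mul_comm]
    rw [h4, ← h5]
    have hMp : (0:ℝ) ≤ M ^ p := rpow_nonneg hM0.le _
    nlinarith
  have hbound : ∫ ω, (Metric.infDist (X ω) (({a} : Finset (Euc d)) : Set (Euc d))) ^ p ∂P
      ≤ M ^ p * 2 := by
    calc ∫ ω, (Metric.infDist (X ω) (({a} : Finset (Euc d)) : Set (Euc d))) ^ p ∂P
        ≤ ∫ ω, M ^ p * (1 + I⁻¹ * ‖X ω - a‖ ^ (p + η)) ∂P := by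
          apply integral_mono_of_nonneg
          · exact Filter.Eventually.of_forall fun ω => rpow_nonneg Metric.infDist_nonneg _
          · exact ((integrable_const (1:ℝ)).add (hintq.const_mul _)).const_mul _
          · exact Filter.Eventually.of_forall hpt
      _ = M ^ p * 2 := by
          rw [integral_const_mul, integral_one_add P X a (p+η) hintq I hIdef hIpos]
  rw [quantErrRV]
  calc (∫ ω, (Metric.infDist (X ω) (({a} : Finset (Euc d)) : Set (Euc d))) ^ p ∂P) ^ (1/p)
      ≤ (M ^ p * 2) ^ (1/p) := by
        apply rpow_le_rpow (integral_nonneg fun ω => rpow_nonneg Metric.infDist_nonneg _)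
          hbound (by positivity)
    _ = M * 2 ^ (1/p) := by
        rw [mul_rpow (rpow_nonneg hM0.le _) (by norm_num), ← Real.rpow_mul hM0.le,
          mul_one_div_cancel hp.ne', Real.rpow_one]

noncomputable local instance (d : ℕ) : DecidableEq (Euc d) := Classical.decEq _

lemma quant_grid_le (p η : ℝ) (hp : 0 < p) (hη : 0 < η) (X : Ω → Euc d) (a : Euc d)
    (hintq : Integrable (fun ω => ‖X ω - a‖ ^ (p + η)) P)
    (I M : ℝ) (hIdef : I = ∫ ω, ‖X ω - a‖ ^ (p + η) ∂P) (hIpos : 0 < I)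
    (hMdef : M = I ^ (1/(p+η)))
    (n : ℕ) (hn0 : (0:ℝ) < n) (G : Finset (Euc d))
    (hGcov : ∀ z : Euc d, ∃ g ∈ G, dist z g ≤ (2*(d:ℝ)/n) * (1 + ‖z‖ ^ (1 + η/p))) :
    quantErrRV p P X (G.image (fun g => a + M • g))
      ≤ M * (2*(d:ℝ)/n) * ((2:ℝ)^(p+1)) ^ (1/p) := by
  have hM0 : 0 < M := hMdef ▸ rpow_pos_of_pos hIpos _
  have hMq : M ^ (p + η) = I := by
    rw [hMdef, ← Real.rpow_mul hIpos.le, one_div, inv_mul_cancel₀ (by positivity), Real.rpow_one]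
  have hdn0 : (0:ℝ) ≤ 2*(d:ℝ)/n := by positivity
  set Γ : Finset (Euc d) := G.image (fun g => a + M • g) with hΓ
  have hpt : ∀ ω, (Metric.infDist (X ω) (Γ : Set (Euc d))) ^ p
      ≤ (M * (2*(d:ℝ)/n)) ^ p * 2 ^ p * (1 + I⁻¹ * ‖X ω - a‖ ^ (p + η)) := by
    intro ω
    obtain ⟨g, hg, hgd⟩ := hGcov (M⁻¹ • (X ω - a))
    have hmem : a + M • g ∈ (Γ : Set (Euc d)) := by
      rw [hΓ]
      exact_mod_cast Finset.mem_image.mpr ⟨g, hg, rfl⟩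
    have h1 : Metric.infDist (X ω) (Γ : Set (Euc d)) ≤ dist (X ω) (a + M • g) :=
      Metric.infDist_le_dist_of_mem hmem
    have h2 : dist (X ω) (a + M • g) = M * dist (M⁻¹ • (X ω - a)) g := by
      rw [dist_eq_norm, dist_eq_norm]
      have e1 : X ω - (a + M • g) = M • (M⁻¹ • (X ω - a) - g) := by
        rw [smul_sub, smul_inv_smul₀ hM0.ne']
        abel
      rw [e1, norm_smul, Real.norm_eq_abs, abs_of_pos hM0]
    have hzn : ‖M⁻¹ • (X ω - a)‖ = M⁻¹ * ‖X ω - a‖ := by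
      rw [norm_smul, norm_inv, Real.norm_eq_abs, abs_of_pos hM0]
    have hzp : (0:ℝ) ≤ 1 + ‖M⁻¹ • (X ω - a)‖ ^ (1 + η/p) := by positivity
    have h3 : Metric.infDist (X ω) (Γ : Set (Euc d))
        ≤ (M * (2*(d:ℝ)/n)) * (1 + ‖M⁻¹ • (X ω - a)‖ ^ (1 + η/p)) := by
      calc Metric.infDist (X ω) (Γ : Set (Euc d)) ≤ M * dist (M⁻¹ • (X ω - a)) g := h2 ▸ h1
        _ ≤ M * ((2*(d:ℝ)/n) * (1 + ‖M⁻¹ • (X ω - a)‖ ^ (1 + η/p))) :=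
            mul_le_mul_of_nonneg_left hgd hM0.le
        _ = (M * (2*(d:ℝ)/n)) * (1 + ‖M⁻¹ • (X ω - a)‖ ^ (1 + η/p)) := by ring
    have h4 : (Metric.infDist (X ω) (Γ : Set (Euc d))) ^ p
        ≤ ((M * (2*(d:ℝ)/n)) * (1 + ‖M⁻¹ • (X ω - a)‖ ^ (1 + η/p))) ^ p :=
      rpow_le_rpow Metric.infDist_nonneg h3 hp.le
    have h5 : ((M * (2*(d:ℝ)/n)) * (1 + ‖M⁻¹ • (X ω - a)‖ ^ (1 + η/p))) ^ p
        = (M * (2*(d:ℝ)/n)) ^ p * (1 + ‖M⁻¹ • (X ω - a)‖ ^ (1 + η/p)) ^ p :=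
      mul_rpow (by positivity) hzp
    have h6 : (1 + ‖M⁻¹ • (X ω - a)‖ ^ (1 + η/p)) ^ p
        ≤ 2 ^ p * (1 + (‖M⁻¹ • (X ω - a)‖ ^ (1 + η/p)) ^ p) := by
      have := rpow_add_le_two_rpow p 1 (‖M⁻¹ • (X ω - a)‖ ^ (1 + η/p)) hp.le (by norm_num)
        (rpow_nonneg (norm_nonneg _) _)
      rwa [Real.one_rpow] at this
    have h7 : (‖M⁻¹ • (X ω - a)‖ ^ (1 + η/p)) ^ p = I⁻¹ * ‖X ω - a‖ ^ (p + η) := by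
      rw [← Real.rpow_mul (norm_nonneg _)]
      have he : (1 + η/p) * p = p + η := by field_simp
      rw [he, hzn, mul_rpow (by positivity) (norm_nonneg _), Real.inv_rpow hM0.le, hMq]
    have hDp : (0:ℝ) ≤ (M * (2*(d:ℝ)/n)) ^ p := rpow_nonneg (by positivity) _
    calc (Metric.infDist (X ω) (Γ : Set (Euc d))) ^ p
        ≤ (M * (2*(d:ℝ)/n)) ^ p * (1 + ‖M⁻¹ • (X ω - a)‖ ^ (1 + η/p)) ^ p := h5 ▸ h4
      _ ≤ (M * (2*(d:ℝ)/n)) ^ p * (2 ^ p * (1 + (‖M⁻¹ • (X ω - a)‖ ^ (1 + η/p)) ^ p)) :=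
          mul_le_mul_of_nonneg_left h6 hDp
      _ = (M * (2*(d:ℝ)/n)) ^ p * 2 ^ p * (1 + I⁻¹ * ‖X ω - a‖ ^ (p + η)) := by rw [h7]; ring
  have hbound : ∫ ω, (Metric.infDist (X ω) (Γ : Set (Euc d))) ^ p ∂P
      ≤ (M * (2*(d:ℝ)/n)) ^ p * ((2:ℝ)^(p+1)) := by
    have he2 : (M * (2*(d:ℝ)/n)) ^ p * 2 ^ p * 2 = (M * (2*(d:ℝ)/n)) ^ p * (2:ℝ)^(p+1) := by
      rw [Real.rpow_add (by norm_num : (0:ℝ) < 2), Real.rpow_one]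
      ring
    calc ∫ ω, (Metric.infDist (X ω) (Γ : Set (Euc d))) ^ p ∂P
        ≤ ∫ ω, (M * (2*(d:ℝ)/n)) ^ p * 2 ^ p * (1 + I⁻¹ * ‖X ω - a‖ ^ (p + η)) ∂P := by
          apply integral_mono_of_nonneg
          · exact Filter.Eventually.of_forall fun ω => rpow_nonneg Metric.infDist_nonneg _
          · exact ((integrable_const (1:ℝ)).add (hintq.const_mul _)).const_mul _
          · exact Filter.Eventually.of_forall hpt
      _ = (M * (2*(d:ℝ)/n)) ^ p * 2 ^ p * 2 := by
          rw [integral_const_mul, integral_one_add P X a (p+η) hintq I hIdef hIpos]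
      _ = (M * (2*(d:ℝ)/n)) ^ p * (2:ℝ)^(p+1) := he2
  rw [quantErrRV]
  calc (∫ ω, (Metric.infDist (X ω) (Γ : Set (Euc d))) ^ p ∂P) ^ (1/p)
      ≤ ((M * (2*(d:ℝ)/n)) ^ p * (2:ℝ)^(p+1)) ^ (1/p) := by
        apply rpow_le_rpow (integral_nonneg fun ω => rpow_nonneg Metric.infDist_nonneg _)
          hbound (by positivity)
    _ = M * (2*(d:ℝ)/n) * ((2:ℝ)^(p+1)) ^ (1/p) := by
        rw [mul_rpow (rpow_nonneg (by positivity) _) (rpow_nonneg (by norm_num) _),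
          ← Real.rpow_mul (by positivity), mul_one_div_cancel hp.ne', Real.rpow_one]

end MeasPart

lemma per_a (d : ℕ) (hd : 1 ≤ d) (p η : ℝ) (hp : 0 < p) (hη : 0 < η) :
    ∃ κ : ℝ, 0 < κ ∧ ∀ (Ω : Type) (_ : MeasurableSpace Ω) (P : Measure Ω),
      IsProbabilityMeasure P →
      ∀ X : Ω → Euc d, Measurable X → Integrable (fun ω => ‖X ω‖ ^ (p + η)) P →
        ∀ N : ℕ, 1 ≤ N → ∀ a : Euc d,
          optQuantErrRV p N P X ≤
            κ * ((∫ ω, ‖X ω - a‖ ^ (p + η) ∂P) ^ (1/(p+η))) * (N : ℝ) ^ (-(1 / (d : ℝ))) := by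
  classical
  have hd' : (1:ℝ) ≤ (d:ℝ) := by exact_mod_cast hd
  have hdne : (d:ℝ) ≠ 0 := by positivity
  have hτ : 0 < η / p := div_pos hη hp
  obtain ⟨C, hC1, hgrid⟩ := shell_grid d hd (η / p) hτ
  have hC0 : 0 < C := by linarith
  have hT1 : (1:ℝ) ≤ 2 ^ d * C := by
    have h1 : (1:ℝ) ≤ 2 ^ d := one_le_pow₀ (by norm_num)
    nlinarith
  set c1 : ℝ := (2:ℝ) ^ (1/p) * (2 ^ d * C) ^ (1/(d:ℝ)) with hc1
  set c2 : ℝ := 4 * (d:ℝ) * C ^ (1/(d:ℝ)) * ((2:ℝ) ^ (p+1)) ^ (1/p) with hc2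
  have hc1pos : 0 < c1 :=
    mul_pos (rpow_pos_of_pos (by norm_num) _) (rpow_pos_of_pos (by linarith) _)
  have hc2pos : 0 < c2 :=
    mul_pos (mul_pos (mul_pos (by norm_num : (0:ℝ) < 4)
      (by linarith : (0:ℝ) < (d:ℝ))) (rpow_pos_of_pos hC0 _))
      (rpow_pos_of_pos (by positivity) _)
  refine ⟨c1 + c2, by linarith, ?_⟩
  intro Ω mΩ P hP X hX hint N hN a
  have hN' : (1:ℝ) ≤ (N:ℝ) := by exact_mod_cast hN
  have hN0 : (0:ℝ) < N := by linarith
  have hNinv : (0:ℝ) < (N:ℝ) ^ (-(1/(d:ℝ))) := rpow_pos_of_pos hN0 _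
  have hintq : Integrable (fun ω => ‖X ω - a‖ ^ (p+η)) P :=
    integrable_shift P X hX (p+η) (by positivity) hint a
  have hI0 : 0 ≤ ∫ ω, ‖X ω - a‖ ^ (p+η) ∂P :=
    integral_nonneg fun ω => rpow_nonneg (norm_nonneg _) _
  have hM0 : 0 ≤ (∫ ω, ‖X ω - a‖ ^ (p+η) ∂P) ^ (1/(p+η)) := rpow_nonneg hI0 _
  rcases eq_or_lt_of_le hI0 with hIz | hIpos
  · -- I = 0
    have hMz : (∫ ω, ‖X ω - a‖ ^ (p+η) ∂P) ^ (1/(p+η)) = 0 := by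
      rw [← hIz, Real.zero_rpow (by positivity)]
    have h1 : optQuantErrRV p N P X ≤ 0 := by
      rw [← quant_singleton_zero P p (p+η) hp (by positivity) X a hintq hIz.symm]
      exact optQuant_le p N P X {a} ⟨a, Finset.mem_singleton_self a⟩ (by simpa using hN)
    calc optQuantErrRV p N P X ≤ 0 := h1
      _ = (c1 + c2) * ((∫ ω, ‖X ω - a‖ ^ (p+η) ∂P) ^ (1/(p+η))) * (N:ℝ)^(-(1/(d:ℝ))) := by
          rw [hMz]; ring
  · rcases lt_or_ge (N:ℝ) (2 ^ d * C) with hNT | hNT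
    · -- small N : singleton grid
      have hqe := quant_singleton_le P p η hp hη X a hintq _ _ rfl hIpos rfl
      have hsmall : (2:ℝ) ^ (1/p) ≤ c1 * (N:ℝ) ^ (-(1/(d:ℝ))) := by
        have h1 : ((2:ℝ) ^ d * C) ^ (1/(d:ℝ)) * (N:ℝ) ^ (-(1/(d:ℝ)))
            = ((2 ^ d * C) / N) ^ (1/(d:ℝ)) := by
          rw [div_rpow (by linarith) hN0.le, Real.rpow_neg hN0.le]
          exact (div_eq_mul_inv _ _).symm
        have h2 : (1:ℝ) ≤ ((2 ^ d * C) / N) ^ (1/(d:ℝ)) := by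
          apply one_le_rpow ?_ (by positivity)
          rw [le_div_iff₀ hN0]
          linarith
        have h3 : (0:ℝ) < (2:ℝ) ^ (1/p) := rpow_pos_of_pos (by norm_num) _
        calc (2:ℝ) ^ (1/p) = (2:ℝ) ^ (1/p) * 1 := by ring
          _ ≤ (2:ℝ) ^ (1/p) * (((2 ^ d * C) / N) ^ (1/(d:ℝ))) := by nlinarith
          _ = c1 * (N:ℝ) ^ (-(1/(d:ℝ))) := by rw [hc1, ← h1]; ring
      calc optQuantErrRV p N P X ≤ quantErrRV p P X {a} :=
            optQuant_le p N P X {a} ⟨a, Finset.mem_singleton_self a⟩ (by simpa using hN)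
        _ ≤ ((∫ ω, ‖X ω - a‖ ^ (p+η) ∂P) ^ (1/(p+η))) * (2:ℝ) ^ (1/p) := hqe
        _ ≤ ((∫ ω, ‖X ω - a‖ ^ (p+η) ∂P) ^ (1/(p+η))) * (c1 * (N:ℝ) ^ (-(1/(d:ℝ)))) :=
            mul_le_mul_of_nonneg_left hsmall hM0
        _ ≤ (c1 + c2) * ((∫ ω, ‖X ω - a‖ ^ (p+η) ∂P) ^ (1/(p+η))) * (N:ℝ) ^ (-(1/(d:ℝ))) := by
            nlinarith [mul_nonneg (mul_nonneg hc2pos.le hM0) hNinv.le]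
    · -- main case : N ≥ 2^d * C
      have hNC0 : (0:ℝ) ≤ (N:ℝ)/C := by positivity
      have hW2 : (2:ℝ) ≤ ((N:ℝ)/C) ^ (1/(d:ℝ)) := by
        have h1 : ((2:ℝ)^d : ℝ) ≤ (N:ℝ)/C := by
          rw [le_div_iff₀ hC0]
          linarith
        have h2 : ((2:ℝ)^d) ^ (1/(d:ℝ)) ≤ ((N:ℝ)/C) ^ (1/(d:ℝ)) :=
          rpow_le_rpow (by positivity) h1 (by positivity)
        have h3 : ((2:ℝ)^d : ℝ) ^ (1/(d:ℝ)) = 2 := by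
          rw [← Real.rpow_natCast 2 d, ← Real.rpow_mul (by norm_num),
            mul_one_div_cancel hdne, Real.rpow_one]
        linarith [h3 ▸ h2]
      set n : ℕ := ⌊((N:ℝ)/C) ^ (1/(d:ℝ))⌋₊ with hn
      have hn1 : 1 ≤ n := Nat.le_floor (by exact_mod_cast (by linarith : (1:ℝ) ≤ ((N:ℝ)/C) ^ (1/(d:ℝ))))
      have hn0 : (0:ℝ) < n := by exact_mod_cast hn1
      have hnW : ((N:ℝ)/C) ^ (1/(d:ℝ)) - 1 < (n:ℝ) := Nat.sub_one_lt_floor _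
      have hninv : 1 / (n:ℝ) ≤ 2 * C^(1/(d:ℝ)) * (N:ℝ)^(-(1/(d:ℝ))) := by
        have hW0 : (0:ℝ) < ((N:ℝ)/C) ^ (1/(d:ℝ)) := by linarith
        have h1 : 1 / (n:ℝ) ≤ 2 / ((N:ℝ)/C) ^ (1/(d:ℝ)) := by
          rw [div_le_div_iff₀ hn0 hW0]
          linarith
        have h2 : 2 / ((N:ℝ)/C) ^ (1/(d:ℝ)) = 2 * C^(1/(d:ℝ)) * (N:ℝ)^(-(1/(d:ℝ))) := by
          rw [div_rpow hN0.le hC0.le, Real.rpow_neg hN0.le]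
          have hNd : (0:ℝ) < (N:ℝ)^(1/(d:ℝ)) := rpow_pos_of_pos hN0 _
          have hCd : (0:ℝ) < C^(1/(d:ℝ)) := rpow_pos_of_pos hC0 _
          field_simp
        linarith [h2 ▸ h1]
      obtain ⟨G, hGne, hGcard, hGcov⟩ := hgrid n hn1
      have hcapR : C * (n:ℝ)^d ≤ (N:ℝ) := by
        have h1 : (n:ℝ) ≤ ((N:ℝ)/C) ^ (1/(d:ℝ)) := Nat.floor_le (by linarith)
        have h2 : (n:ℝ)^d ≤ (((N:ℝ)/C) ^ (1/(d:ℝ)))^d := pow_le_pow_left₀ hn0.le h1 d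
        have h3 : (((N:ℝ)/C) ^ (1/(d:ℝ)))^d = (N:ℝ)/C := by
          rw [← Real.rpow_natCast (((N:ℝ)/C) ^ (1/(d:ℝ))) d, ← Real.rpow_mul hNC0,
            one_div_mul_cancel hdne, Real.rpow_one]
        have h4 : C * (n:ℝ)^d ≤ C * ((N:ℝ)/C) :=
          mul_le_mul_of_nonneg_left (h3 ▸ h2) hC0.le
        rw [mul_div_cancel₀ _ hC0.ne'] at h4
        exact h4
      set M : ℝ := (∫ ω, ‖X ω - a‖ ^ (p+η) ∂P) ^ (1/(p+η)) with hM
      have hΓne : (G.image (fun g => a + M • g)).Nonempty := hGne.image _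
      have hΓcard : (G.image (fun g => a + M • g)).card ≤ N := by
        have h1 : ((G.image (fun g => a + M • g)).card : ℝ) ≤ (N:ℝ) := by
          calc ((G.image (fun g => a + M • g)).card : ℝ) ≤ (G.card : ℝ) := by
                exact_mod_cast Finset.card_image_le
            _ ≤ C * (n:ℝ)^d := hGcard
            _ ≤ (N:ℝ) := hcapR
        exact_mod_cast h1
      have hqe := quant_grid_le P p η hp hη X a hintq _ M rfl hIpos hM n hn0 G hGcov
      have hfinal : M * (2*(d:ℝ)/n) * ((2:ℝ) ^ (p+1)) ^ (1/p)
          ≤ c2 * M * (N:ℝ)^(-(1/(d:ℝ))) := by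
        have hc3 : (0:ℝ) < ((2:ℝ) ^ (p+1)) ^ (1/p) := rpow_pos_of_pos (by positivity) _
        have h1 : M * (2*(d:ℝ)/n) ≤ M * (2 * (d:ℝ)) * (2 * C^(1/(d:ℝ)) * (N:ℝ)^(-(1/(d:ℝ)))) := by
          have e1 : M * (2 * (d:ℝ) / n) = M * (2 * (d:ℝ)) * (1/(n:ℝ)) := by ring
          rw [e1]
          apply mul_le_mul_of_nonneg_left hninv (by positivity)
        calc M * (2*(d:ℝ)/n) * ((2:ℝ) ^ (p+1)) ^ (1/p)
            ≤ (M * (2 * (d:ℝ)) * (2 * C^(1/(d:ℝ)) * (N:ℝ)^(-(1/(d:ℝ))))) * ((2:ℝ) ^ (p+1)) ^ (1/p) :=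
              mul_le_mul_of_nonneg_right h1 hc3.le
          _ = c2 * M * (N:ℝ)^(-(1/(d:ℝ))) := by rw [hc2]; ring
      calc optQuantErrRV p N P X ≤ quantErrRV p P X (G.image (fun g => a + M • g)) :=
            optQuant_le p N P X _ hΓne hΓcard
        _ ≤ M * (2*(d:ℝ)/n) * ((2:ℝ) ^ (p+1)) ^ (1/p) := by convert hqe
        _ ≤ c2 * M * (N:ℝ)^(-(1/(d:ℝ))) := hfinal
        _ ≤ (c1 + c2) * M * (N:ℝ)^(-(1/(d:ℝ))) := by
            nlinarith [mul_nonneg (mul_nonneg hc1pos.le hM0) hNinv.le]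


/-- **Pierce's Lemma.** For every dimension `d ≥ 1` and all `p, η > 0` there exists a finite
constant `κ_{d,p,η}` such that for every ℝ^d-valued random vector `X` (with finite
`(p+η)`-moment) on any probability space and every `N ≥ 1`:
`e_{p,N}(X) ≤ κ_{d,p,η} · σ_{p+η}(X) · N^{−1/d}`. -/
theorem pierce_lemma (d : ℕ) (hd : 1 ≤ d) (p η : ℝ) (hp : 0 < p) (hη : 0 < η) :
    ∃ κ : ℝ, ∀ (Ω : Type) (_ : MeasurableSpace Ω) (P : Measure Ω), IsProbabilityMeasure P →
      ∀ X : Ω → Euc d, Measurable X → Integrable (fun ω => ‖X ω‖ ^ (p + η)) P →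
        ∀ N : ℕ, 1 ≤ N →
          optQuantErrRV p N P X ≤ κ * sigmaRV (p + η) P X * (N : ℝ) ^ (-(1 / (d : ℝ))) := by
  obtain ⟨κ, hκ0, hκ⟩ := per_a d hd p η hp hη
  refine ⟨κ, ?_⟩
  intro Ω mΩ P hP X hX hint N hN
  have hN0 : (0:ℝ) < N := by exact_mod_cast hN
  have hc0 : (0:ℝ) < κ * (N:ℝ) ^ (-(1/(d:ℝ))) := mul_pos hκ0 (rpow_pos_of_pos hN0 _)
  have hdiv : ∀ a : Euc d, optQuantErrRV p N P X / (κ * (N:ℝ) ^ (-(1/(d:ℝ))))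
      ≤ (∫ ω, ‖X ω - a‖ ^ (p + η) ∂P) ^ (1/(p+η)) := by
    intro a
    rw [div_le_iff₀ hc0]
    calc optQuantErrRV p N P X
        ≤ κ * ((∫ ω, ‖X ω - a‖ ^ (p + η) ∂P) ^ (1/(p+η))) * (N:ℝ) ^ (-(1/(d:ℝ))) :=
          hκ Ω mΩ P hP X hX hint N hN a
      _ = (∫ ω, ‖X ω - a‖ ^ (p + η) ∂P) ^ (1/(p+η)) * (κ * (N:ℝ) ^ (-(1/(d:ℝ)))) := by ring
  have hinf : optQuantErrRV p N P X / (κ * (N:ℝ) ^ (-(1/(d:ℝ)))) ≤ sigmaRV (p+η) P X :=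
    le_ciInf hdiv
  rw [div_le_iff₀ hc0] at hinf
  calc optQuantErrRV p N P X ≤ sigmaRV (p+η) P X * (κ * (N:ℝ) ^ (-(1/(d:ℝ)))) := hinf
    _ = κ * sigmaRV (p+η) P X * (N:ℝ) ^ (-(1/(d:ℝ))) := by ring
end
end

section
/- Let p ≥ 2 and Δ ∈ (0, Δ_max). Assume b(t,·) and σ(t,·) are Lipschitz with constants [b]_Lip and [σ]_Lip ([σ]_Lip with respect to the operator norm), and let Z be an ℝ^q-valued random vector with E[Z] = 0 and E|Z|^p < ∞. Then for all x, x' ∈ ℝ^d and every k: E| E_k(x,Z) − E_k(x',Z) |^p ≤ |x−x'|^p · exp( Δ( p[b]_Lip + c_p^{(1)} + [σ]_Lip^p c^{(2)}_{p,Δ_max} E|Z|^p ) ). In particular the Euler operator E_k(·,Z) is L^p-Lipschitz with constant exp( Δ( p[b]_Lip + c_p^{(1)} + [σ]_Lip^p c^{(2)}_{p,Δ_max} E|Z|^p )/p ). -/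
open MeasureTheory Real

set_option maxHeartbeats 4000000

noncomputable section

def c₁ (r : ℝ) : ℝ := 2 ^ (max (r - 3) 0) * ((r - 1) * (r - 2) / 2)

def c₂ (r h₀ : ℝ) : ℝ := 2 ^ (max (r - 3) 0) * (r - 1) * (1 + r / 2 * h₀ ^ (r / 2 - 1))

section EulerAux
open Real Filter Topology

lemma add_rpow_le_two_rpow_mul {a b m : ℝ} (ha : 0 ≤ a) (hb : 0 ≤ b) (hm : 0 ≤ m) :
    (a + b) ^ m ≤ 2 ^ max (m - 1) 0 * (a ^ m + b ^ m) := by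
  rcases le_or_gt m 1 with h1 | h1
  · rw [max_eq_right (by linarith), rpow_zero, one_mul]
    have := NNReal.rpow_add_le_add_rpow a.toNNReal b.toNNReal hm h1
    have h2 := NNReal.coe_le_coe.2 this
    push_cast at h2
    rwa [Real.coe_toNNReal a ha, Real.coe_toNNReal b hb] at h2
  · rw [max_eq_left (by linarith)]
    have := NNReal.rpow_add_le_mul_rpow_add_rpow a.toNNReal b.toNNReal h1.le
    have h2 := NNReal.coe_le_coe.2 this
    push_cast at h2
    rwa [Real.coe_toNNReal a ha, Real.coe_toNNReal b hb] at h2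

lemma young_aux {u v p : ℝ} (hu : 0 ≤ u) (hv : 0 ≤ v) (hp : 2 ≤ p) :
    u ^ (p - 2) * v ^ 2 ≤ (p - 2) / p * u ^ p + 2 / p * v ^ p := by
  have hp0 : (0:ℝ) < p := by linarith
  have h := Real.geom_mean_le_arith_mean2_weighted
    (w₁ := (p-2)/p) (w₂ := 2/p) (p₁ := u ^ p) (p₂ := v ^ p)
    (div_nonneg (by linarith) hp0.le) (div_nonneg (by norm_num) hp0.le) (Real.rpow_nonneg hu p) (Real.rpow_nonneg hv p)
    (by field_simp; ring)
  have e1 : (u ^ p) ^ ((p-2)/p) = u ^ (p-2) := by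
    rw [← Real.rpow_mul hu]
    congr 1
    field_simp
  have e2 : (v ^ p) ^ ((2:ℝ)/p) = v ^ (2:ℕ) := by
    rw [← Real.rpow_mul hv]
    rw [show p * (2/p) = (2:ℝ) by field_simp]
    rw [Real.rpow_two]
  rwa [e1, e2] at h

lemma taylor_eps {p s t c ε : ℝ} (hp : 2 ≤ p) (hs : 0 ≤ s) (ht : 0 ≤ t)
    (hc : c ^ 2 ≤ s ^ 2 * t ^ 2) (hε : 0 < ε) :
    (s ^ 2 + 2 * c + t ^ 2 + ε) ^ (p / 2)
      ≤ (s ^ 2 + ε) ^ (p / 2) + p * (s ^ 2 + ε) ^ (p / 2 - 1) * c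
        + p * (p - 1) / 2 * (s + t + Real.sqrt ε) ^ (p - 2) * t ^ 2 := by
  set r : ℝ := p / 2 with hr_def
  have hr : 1 ≤ r := by rw [hr_def]; linarith
  have hcle : c ≤ s * t := by nlinarith [sq_nonneg (c - s*t), sq_nonneg (c + s*t), mul_nonneg hs ht]
  set u : ℝ → ℝ := fun l => s ^ 2 + 2 * c * l + t ^ 2 * l ^ 2 + ε with hu_def
  have hu_pos : ∀ l : ℝ, 0 < u l := by
    intro l
    have h1 : -(s * t * |l|) ≤ c * l := by
      have := neg_abs_le (c * l)
      have h2 : |c * l| ≤ s * t * |l| := by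
        rw [abs_mul]
        have : |c| ≤ s * t := by
          rw [abs_le]
          constructor <;> nlinarith [sq_nonneg (c - s*t), sq_nonneg (c + s*t), mul_nonneg hs ht]
        exact mul_le_mul_of_nonneg_right this (abs_nonneg l)
      linarith
    have h3 : (0:ℝ) ≤ (s - t * |l|) ^ 2 := sq_nonneg _
    simp only [hu_def]
    nlinarith [sq_abs l]
  have hu' : ∀ l : ℝ, HasDerivAt u (2 * c + 2 * t ^ 2 * l) l := by
    intro l
    have h1 : HasDerivAt (fun l : ℝ => 2 * c * l) (2 * c) l := by
      simpa using (hasDerivAt_id l).const_mul (2 * c)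
    have h2 : HasDerivAt (fun l : ℝ => t ^ 2 * l ^ 2) (t ^ 2 * (2 * l)) l := by
      simpa using (hasDerivAt_pow 2 l).const_mul (t ^ 2)
    have h := ((h1.const_add (s ^ 2)).add h2).add_const ε
    exact h.congr_deriv (by ring)
  set M : ℝ := s + t + Real.sqrt ε with hM_def
  have hM : 0 ≤ M := by
    have := Real.sqrt_nonneg ε
    rw [hM_def]; linarith
  set g : ℝ → ℝ := fun l => u l ^ r with hg_def
  set g1 : ℝ → ℝ := fun l => (2 * c + 2 * t ^ 2 * l) * r * u l ^ (r - 1) with hg1_def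
  set g2 : ℝ → ℝ := fun l =>
    2 * t ^ 2 * r * u l ^ (r - 1)
      + (2 * c + 2 * t ^ 2 * l) * r * ((2 * c + 2 * t ^ 2 * l) * (r - 1) * u l ^ (r - 1 - 1))
    with hg2_def
  have hg' : ∀ l : ℝ, HasDerivAt g (g1 l) l := fun l =>
    (hu' l).rpow_const (Or.inl (hu_pos l).ne')
  have hg1' : ∀ l : ℝ, HasDerivAt g1 (g2 l) l := by
    intro l
    have ha : HasDerivAt (fun l : ℝ => (2 * c + 2 * t ^ 2 * l) * r) (2 * t ^ 2 * r) l := by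
      have h0 : HasDerivAt (fun l : ℝ => 2 * c + 2 * t ^ 2 * l) (2 * t ^ 2) l := by
        simpa using ((hasDerivAt_id l).const_mul (2 * t ^ 2)).const_add (2 * c)
      exact h0.mul_const r
    have hb : HasDerivAt (fun l : ℝ => u l ^ (r - 1))
        ((2 * c + 2 * t ^ 2 * l) * (r - 1) * u l ^ (r - 1 - 1)) l :=
      (hu' l).rpow_const (Or.inl (hu_pos l).ne')
    exact ha.mul hb
  set C : ℝ := p * (p - 1) * M ^ (p - 2) * t ^ 2 with hC_def
  -- bound on g2 over [0,1]
  have hg2_le : ∀ l ∈ Set.Icc (0:ℝ) 1, g2 l ≤ C := by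
    intro l hl
    obtain ⟨hl0, hl1⟩ := hl
    have hQpos := hu_pos l
    have hr1 : (0:ℝ) ≤ r - 1 := by linarith
    have hQM : u l ≤ M ^ 2 := by
      simp only [hu_def, hM_def]
      nlinarith [mul_le_mul_of_nonneg_right hcle hl0,
        mul_le_of_le_one_right (mul_nonneg hs ht) hl1,
        mul_nonneg (mul_nonneg (sq_nonneg t) (sub_nonneg.2 hl1)) (by linarith : (0:ℝ) ≤ 1 + l),
        Real.sq_sqrt hε.le, Real.sqrt_nonneg ε,
        mul_nonneg (add_nonneg hs ht) (Real.sqrt_nonneg ε)]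
    have hQ'sq : (2 * c + 2 * t ^ 2 * l) ^ 2 ≤ 4 * u l * t ^ 2 := by
      simp only [hu_def]
      nlinarith [hc, mul_nonneg hε.le (sq_nonneg t)]
    have hQpow : u l ^ (r - 1) ≤ M ^ (p - 2) := by
      have h1 : u l ^ (r - 1) ≤ (M ^ 2) ^ (r - 1) :=
        Real.rpow_le_rpow hQpos.le hQM hr1
      have h2 : ((M : ℝ) ^ 2) ^ (r - 1) = M ^ (p - 2) := by
        rw [← Real.rpow_natCast M 2, ← Real.rpow_mul hM]
        congr 1
        rw [hr_def]; push_cast; ring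
      rwa [h2] at h1
    have hQid : u l ^ (r - 1 - 1) * u l = u l ^ (r - 1) := by
      have h3 : u l ^ (r - 1 - 1) * u l ^ (1:ℝ) = u l ^ (r - 1 - 1 + 1) :=
        (Real.rpow_add hQpos _ _).symm
      rw [Real.rpow_one] at h3
      rw [h3]
      norm_num
    have hQrpow_nonneg : (0:ℝ) ≤ u l ^ (r - 1 - 1) := Real.rpow_nonneg hQpos.le _
    have key2 : (2 * c + 2 * t ^ 2 * l) * r * ((2 * c + 2 * t ^ 2 * l) * (r - 1) * u l ^ (r - 1 - 1))
        ≤ 4 * r * (r - 1) * t ^ 2 * u l ^ (r - 1) := by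
      have c1 : (2 * c + 2 * t ^ 2 * l) ^ 2 * u l ^ (r - 1 - 1)
          ≤ (4 * u l * t ^ 2) * u l ^ (r - 1 - 1) :=
        mul_le_mul_of_nonneg_right hQ'sq hQrpow_nonneg
      have c2 : (4 * u l * t ^ 2) * u l ^ (r - 1 - 1) = 4 * t ^ 2 * (u l ^ (r - 1 - 1) * u l) := by
        ring
      rw [c2, hQid] at c1
      calc (2 * c + 2 * t ^ 2 * l) * r * ((2 * c + 2 * t ^ 2 * l) * (r - 1) * u l ^ (r - 1 - 1))
          = r * (r - 1) * ((2 * c + 2 * t ^ 2 * l) ^ 2 * u l ^ (r - 1 - 1)) := by ring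
        _ ≤ r * (r - 1) * (4 * t ^ 2 * u l ^ (r - 1)) :=
            mul_le_mul_of_nonneg_left c1 (mul_nonneg (by linarith) hr1)
        _ = 4 * r * (r - 1) * t ^ 2 * u l ^ (r - 1) := by ring
    have key1 : 2 * t ^ 2 * r * u l ^ (r - 1) + 4 * r * (r - 1) * t ^ 2 * u l ^ (r - 1)
        ≤ (2 * r + 4 * r * (r - 1)) * t ^ 2 * M ^ (p - 2) := by
      have hco : (0:ℝ) ≤ (2 * r + 4 * r * (r - 1)) * t ^ 2 := by
        have : (0:ℝ) ≤ 2 * r + 4 * r * (r - 1) := by nlinarith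
        exact mul_nonneg this (sq_nonneg t)
      calc 2 * t ^ 2 * r * u l ^ (r - 1) + 4 * r * (r - 1) * t ^ 2 * u l ^ (r - 1)
          = (2 * r + 4 * r * (r - 1)) * t ^ 2 * u l ^ (r - 1) := by ring
        _ ≤ (2 * r + 4 * r * (r - 1)) * t ^ 2 * M ^ (p - 2) :=
            mul_le_mul_of_nonneg_left hQpow hco
    have hCeq : (2 * r + 4 * r * (r - 1)) * t ^ 2 * M ^ (p - 2) = C := by
      rw [hC_def, hr_def]; ring
    simp only [hg2_def]
    calc 2 * t ^ 2 * r * u l ^ (r - 1)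
          + (2 * c + 2 * t ^ 2 * l) * r * ((2 * c + 2 * t ^ 2 * l) * (r - 1) * u l ^ (r - 1 - 1))
        ≤ 2 * t ^ 2 * r * u l ^ (r - 1) + 4 * r * (r - 1) * t ^ 2 * u l ^ (r - 1) := by
          linarith [key2]
      _ ≤ (2 * r + 4 * r * (r - 1)) * t ^ 2 * M ^ (p - 2) := key1
      _ = C := hCeq
  -- first monotonicity: θ l := g1 0 + C l - g1 l  is ≥ 0 on [0,1]
  set θ : ℝ → ℝ := fun l => g1 0 + C * l - g1 l with hθ_def
  have hθ' : ∀ l : ℝ, HasDerivAt θ (C - g2 l) l := by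
    intro l
    have h0 : HasDerivAt (fun l : ℝ => g1 0 + C * l) C l := by
      simpa using ((hasDerivAt_id l).const_mul C).const_add (g1 0)
    exact h0.sub (hg1' l)
  have hθdiff : Differentiable ℝ θ := fun l => (hθ' l).differentiableAt
  have hθmono : MonotoneOn θ (Set.Icc 0 1) := by
    apply monotoneOn_of_deriv_nonneg (convex_Icc 0 1) hθdiff.continuous.continuousOn
      hθdiff.differentiableOn
    intro x hx
    rw [interior_Icc] at hx
    rw [(hθ' x).deriv]
    have := hg2_le x ⟨hx.1.le, hx.2.le⟩
    linarith
  have hθ0 : θ 0 = 0 := by simp [hθ_def]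
  have hθnonneg : ∀ l ∈ Set.Icc (0:ℝ) 1, 0 ≤ θ l := by
    intro l hl
    have := hθmono (Set.left_mem_Icc.2 (by norm_num)) hl hl.1
    rw [hθ0] at this
    exact this
  -- second monotonicity: φ l := g 0 + g1 0 l + C l²/2 - g l
  set φ : ℝ → ℝ := fun l => g 0 + g1 0 * l + C / 2 * l ^ 2 - g l with hφ_def
  have hφ' : ∀ l : ℝ, HasDerivAt φ (θ l) l := by
    intro l
    have h1 : HasDerivAt (fun l : ℝ => g1 0 * l) (g1 0) l := by
      simpa using (hasDerivAt_id l).const_mul (g1 0)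
    have h2 : HasDerivAt (fun l : ℝ => C / 2 * l ^ 2) (C / 2 * (2 * l)) l := by
      simpa using (hasDerivAt_pow 2 l).const_mul (C / 2)
    have h := (((h1.const_add (g 0)).add h2).sub (hg' l))
    exact h.congr_deriv (by simp only [hθ_def]; ring)
  have hφdiff : Differentiable ℝ φ := fun l => (hφ' l).differentiableAt
  have hφmono : MonotoneOn φ (Set.Icc 0 1) := by
    apply monotoneOn_of_deriv_nonneg (convex_Icc 0 1) hφdiff.continuous.continuousOn
      hφdiff.differentiableOn
    intro x hx
    rw [interior_Icc] at hx
    rw [(hφ' x).deriv]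
    exact hθnonneg x ⟨hx.1.le, hx.2.le⟩
  have hφ0 : φ 0 = 0 := by simp [hφ_def]
  have hφ1 : 0 ≤ φ 1 := by
    have := hφmono (Set.left_mem_Icc.2 (by norm_num)) (Set.right_mem_Icc.2 (by norm_num))
      (by norm_num : (0:ℝ) ≤ 1)
    rw [hφ0] at this
    exact this
  -- conclude
  have hu1 : u 1 = s ^ 2 + 2 * c + t ^ 2 + ε := by simp only [hu_def]; ring
  have hu0 : u 0 = s ^ 2 + ε := by simp only [hu_def]; ring
  have h2r : 2 * r = p := by rw [hr_def]; ring
  have hg1eq : g 1 = (s ^ 2 + 2 * c + t ^ 2 + ε) ^ r := by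
    simp only [hg_def]; rw [hu1]
  have hg0eq : g 0 = (s ^ 2 + ε) ^ r := by simp only [hg_def]; rw [hu0]
  have hg10eq : g1 0 = p * (s ^ 2 + ε) ^ (r - 1) * c := by
    simp only [hg1_def]
    rw [hu0, ← h2r]
    ring
  have hfin : g 1 ≤ g 0 + g1 0 * 1 + C / 2 * 1 ^ 2 := by
    have : φ 1 = g 0 + g1 0 * 1 + C / 2 * 1 ^ 2 - g 1 := rfl
    rw [this] at hφ1
    linarith
  rw [hg1eq, hg0eq, hg10eq] at hfin
  rw [hC_def] at hfin
  calc (s ^ 2 + 2 * c + t ^ 2 + ε) ^ r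
      ≤ (s ^ 2 + ε) ^ r + p * (s ^ 2 + ε) ^ (r - 1) * c * 1
        + p * (p - 1) * M ^ (p - 2) * t ^ 2 / 2 * 1 ^ 2 := hfin
    _ = (s ^ 2 + ε) ^ r + p * (s ^ 2 + ε) ^ (r - 1) * c
        + p * (p - 1) / 2 * M ^ (p - 2) * t ^ 2 := by ring
lemma sq_rpow_half {s q : ℝ} (hs : 0 ≤ s) : ((s ^ 2 : ℝ)) ^ (q / 2) = s ^ q := by
  rw [← Real.rpow_natCast s 2, ← Real.rpow_mul hs]
  push_cast
  rw [show (2:ℝ) * (q / 2) = q by ring]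

lemma taylor_limit {p s t c : ℝ} (hp : 2 ≤ p) (hs : 0 ≤ s) (ht : 0 ≤ t)
    (hc : c ^ 2 ≤ s ^ 2 * t ^ 2) :
    (s ^ 2 + 2 * c + t ^ 2) ^ (p / 2)
      ≤ s ^ p + p * s ^ (p - 2) * c + p * (p - 1) / 2 * (s + t) ^ (p - 2) * t ^ 2 := by
  have hp0 : (0:ℝ) < p := by linarith
  set L := 𝓝[>] (0:ℝ)
  have hL : L ≤ 𝓝 0 := nhdsWithin_le_nhds
  -- tendsto of the LHS family
  have h00 : Tendsto (fun ε : ℝ => ε) (𝓝 (0:ℝ)) (𝓝 0) := tendsto_id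
  have hbase : Tendsto (fun ε : ℝ => s ^ 2 + 2 * c + t ^ 2 + ε) L (𝓝 (s ^ 2 + 2 * c + t ^ 2)) := by
    simpa using (h00.const_add (s ^ 2 + 2 * c + t ^ 2)).mono_left hL
  have hlhs : Tendsto (fun ε : ℝ => (s ^ 2 + 2 * c + t ^ 2 + ε) ^ (p / 2)) L
      (𝓝 ((s ^ 2 + 2 * c + t ^ 2) ^ (p / 2))) :=
    (Real.continuousAt_rpow_const _ _ (Or.inr (by positivity))).tendsto.comp hbase
  -- tendsto of the RHS family
  have hb1 : Tendsto (fun ε : ℝ => s ^ 2 + ε) L (𝓝 (s ^ 2)) := by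
    simpa using (h00.const_add (s ^ 2)).mono_left hL
  have h1 : Tendsto (fun ε : ℝ => (s ^ 2 + ε) ^ (p / 2)) L (𝓝 (s ^ p)) := by
    have := (Real.continuousAt_rpow_const (s ^ 2) (p / 2) (Or.inr (by positivity))).tendsto.comp hb1
    rwa [sq_rpow_half hs] at this
  have h2 : Tendsto (fun ε : ℝ => p * (s ^ 2 + ε) ^ (p / 2 - 1) * c) L
      (𝓝 (p * s ^ (p - 2) * c)) := by
    have h2a : Tendsto (fun ε : ℝ => (s ^ 2 + ε) ^ (p / 2 - 1)) L (𝓝 (s ^ (p - 2))) := by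
      have := (Real.continuousAt_rpow_const (s ^ 2) (p / 2 - 1)
        (Or.inr (by linarith))).tendsto.comp hb1
      have e : ((s ^ 2 : ℝ)) ^ (p / 2 - 1) = s ^ (p - 2) := by
        rw [show p / 2 - 1 = (p - 2) / 2 by ring, sq_rpow_half hs]
      rwa [e] at this
    simpa [mul_comm, mul_assoc] using (h2a.const_mul p).mul_const c
  have h3 : Tendsto (fun ε : ℝ => p * (p - 1) / 2 * (s + t + Real.sqrt ε) ^ (p - 2) * t ^ 2) L
      (𝓝 (p * (p - 1) / 2 * (s + t) ^ (p - 2) * t ^ 2)) := by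
    have hsq : Tendsto (fun ε : ℝ => s + t + Real.sqrt ε) L (𝓝 (s + t)) := by
      have h0 : Tendsto Real.sqrt (𝓝 (0:ℝ)) (𝓝 (0:ℝ)) := by
        simpa using Real.continuous_sqrt.tendsto 0
      have := (h0.mono_left hL).const_add (s + t)
      simpa using this
    have hpow : Tendsto (fun ε : ℝ => (s + t + Real.sqrt ε) ^ (p - 2)) L (𝓝 ((s + t) ^ (p - 2))) :=
      (Real.continuousAt_rpow_const (s + t) (p - 2) (Or.inr (by linarith))).tendsto.comp hsq
    simpa [mul_comm, mul_assoc] using (hpow.const_mul (p * (p - 1) / 2)).mul_const (t ^ 2)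
  have hrhs := (h1.add h2).add h3
  refine le_of_tendsto_of_tendsto hlhs hrhs ?_
  filter_upwards [eventually_mem_nhdsWithin] with ε hε
  exact taylor_eps hp hs ht hc (Set.mem_Ioi.1 hε)

lemma vec_ineq {E : Type*} [NormedAddCommGroup E] [InnerProductSpace ℝ E] {p : ℝ}
    (hp : 2 ≤ p) (u v : E) :
    ‖u + v‖ ^ p
      ≤ ‖u‖ ^ p + p * ‖u‖ ^ (p - 2) * (inner ℝ u v : ℝ)
        + p * (p - 1) / 2 * (‖u‖ + ‖v‖) ^ (p - 2) * ‖v‖ ^ 2 := by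
  have hc : (inner ℝ u v : ℝ) ^ 2 ≤ ‖u‖ ^ 2 * ‖v‖ ^ 2 := by
    have h := abs_real_inner_le_norm u v
    nlinarith [abs_nonneg (inner ℝ u v : ℝ), sq_abs (inner ℝ u v : ℝ), norm_nonneg u, norm_nonneg v]
  have key := taylor_limit hp (norm_nonneg u) (norm_nonneg v) hc
  have e : ‖u + v‖ ^ p = (‖u + v‖ ^ 2) ^ (p / 2) := (sq_rpow_half (norm_nonneg _)).symm
  rw [e, norm_add_sq_real]
  exact key

end EulerAux

/-- The Euler operator `E_k(x,ε) = x + Δ b(t_k,x) + √Δ σ(t_k,x) ε`. -/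
def euler {d q : ℕ} (Δ : ℝ) (b : ℝ → Euc d → Euc d) (σ : ℝ → Euc d → (Euc q →L[ℝ] Euc d))
    (tk : ℝ) (x : Euc d) (e : Euc q) : Euc d :=
  x + Δ • b tk x + Real.sqrt Δ • (σ tk x) e

/-- `L^p`-Lipschitz property of the Euler operator for `p ≥ 2`:
`E|E_k(x,Z) − E_k(x',Z)|^p ≤ |x−x'|^p exp(Δ(p[b]_Lip + c_p^{(1)} + [σ]_Lip^p c^{(2)}_{p,Δmax} E|Z|^p))`,
and in particular `E_k(·,Z)` is `L^p`-Lipschitz with constant `exp(Δ(⋯)/p)`. -/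
theorem euler_Lp_lipschitz_of_two_le (d q : ℕ) (T Δmax : ℝ) (n : ℕ) (hn : 0 < n) (hT : 0 < T)
    (hΔmax : 0 < Δmax) (hΔ : T / n < Δmax) (p : ℝ) (hp : 2 ≤ p)
    (b : ℝ → Euc d → Euc d) (σ : ℝ → Euc d → (Euc q →L[ℝ] Euc d)) (Lb Lσ : ℝ)
    (hLb : 0 ≤ Lb) (hLσ : 0 ≤ Lσ)
    (hb : ∀ t x y, ‖b t x - b t y‖ ≤ Lb * ‖x - y‖)
    (hσ : ∀ t x y, ‖σ t x - σ t y‖ ≤ Lσ * ‖x - y‖)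
    (Ω : Type*) [MeasurableSpace Ω] (P : Measure Ω) [IsProbabilityMeasure P]
    (Z : Ω → Euc q) (hZm : Measurable Z) (hZ1 : Integrable Z P)
    (hZ0 : (∫ ω, Z ω ∂P) = 0) (hZp : Integrable (fun ω => ‖Z ω‖ ^ p) P)
    (x x' : Euc d) (k : ℕ) :
    (∫ ω, ‖euler (T / n) b σ ((k : ℝ) * (T / n)) x (Z ω)
          - euler (T / n) b σ ((k : ℝ) * (T / n)) x' (Z ω)‖ ^ p ∂P)
        ≤ ‖x - x'‖ ^ p
          * Real.exp ((T / n) * (p * Lb + c₁ p + Lσ ^ p * c₂ p Δmax * ∫ ω, ‖Z ω‖ ^ p ∂P))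
      ∧ (∫ ω, ‖euler (T / n) b σ ((k : ℝ) * (T / n)) x (Z ω)
          - euler (T / n) b σ ((k : ℝ) * (T / n)) x' (Z ω)‖ ^ p ∂P) ^ (1 / p)
        ≤ Real.exp ((T / n) * (p * Lb + c₁ p + Lσ ^ p * c₂ p Δmax * ∫ ω, ‖Z ω‖ ^ p ∂P) / p)
          * ‖x - x'‖ := by

  have hp0 : (0:ℝ) < p := by linarith
  set Δ : ℝ := T / n with hΔdef
  have hΔ0 : 0 < Δ := div_pos hT (by exact_mod_cast hn)
  set tk : ℝ := (k : ℝ) * Δ with htk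
  set M : ℝ := ∫ ω, ‖Z ω‖ ^ p ∂P with hMdef
  have hMnn : 0 ≤ M := integral_nonneg fun ω => Real.rpow_nonneg (norm_nonneg _) p
  set A : Euc d := (x - x') + Δ • (b tk x - b tk x') with hAdef
  set S : Euc q →L[ℝ] Euc d := σ tk x - σ tk x' with hSdef
  have hdiff : ∀ e : Euc q,
      euler Δ b σ tk x e - euler Δ b σ tk x' e = A + Real.sqrt Δ • S e := by
    intro e
    simp only [euler, hAdef, hSdef, ContinuousLinearMap.sub_apply, smul_sub]
    abel
  set K : ℝ := 2 ^ max (p - 3) 0 * (p * (p - 1) / 2) with hKdef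
  have h2nn : (0:ℝ) ≤ 2 ^ (max (p - 3) 0 : ℝ) := Real.rpow_nonneg (by norm_num) _
  have hKnn : 0 ≤ K := by
    rw [hKdef]
    exact mul_nonneg h2nn (by nlinarith)
  have hc1nn : 0 ≤ c₁ p := by
    unfold c₁
    exact mul_nonneg h2nn (by nlinarith)
  have hc2nn : 0 ≤ c₂ p Δmax := by
    unfold c₂
    have : (0:ℝ) ≤ Δmax ^ (p / 2 - 1) := Real.rpow_nonneg hΔmax.le _
    exact mul_nonneg (mul_nonneg h2nn (by linarith)) (by nlinarith)
  have hKc1 : K * ((p - 2) / p) = c₁ p := by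
    unfold c₁
    rw [hKdef]
    field_simp
  have hKc2 : K * (2 / p) + K * Δmax ^ (p / 2 - 1) = c₂ p Δmax := by
    unfold c₂
    rw [hKdef]
    field_simp
  set W : ℝ := Lσ * ‖x - x'‖ with hWdef
  have hWnn : 0 ≤ W := mul_nonneg hLσ (norm_nonneg _)
  have hSn : ‖S‖ ≤ W := hσ tk x x'
  -- the continuous linear functional  e ↦ ⟪A, √Δ • S e⟫
  set G : Euc q →L[ℝ] ℝ := (innerSL ℝ A).comp (Real.sqrt Δ • S) with hGdef
  have hGapp : ∀ e : Euc q, (inner ℝ A (Real.sqrt Δ • S e) : ℝ) = G e := by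
    intro e
    simp only [hGdef, ContinuousLinearMap.comp_apply, ContinuousLinearMap.smul_apply,
      innerSL_apply_apply]
  -- pointwise bound
  have hpt : ∀ ω, ‖A + Real.sqrt Δ • S (Z ω)‖ ^ p
      ≤ (1 + Δ * c₁ p) * ‖A‖ ^ p + (p * ‖A‖ ^ (p - 2)) * G (Z ω)
        + (Δ * c₂ p Δmax * W ^ p) * ‖Z ω‖ ^ p := by
    intro ω
    set v : Euc d := Real.sqrt Δ • S (Z ω) with hvdef
    set z : ℝ := ‖Z ω‖ with hzdef
    have hznn : 0 ≤ z := norm_nonneg _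
    have h1 := vec_ineq hp A v
    have h2 : (‖A‖ + ‖v‖) ^ (p - 2)
        ≤ 2 ^ max (p - 3) 0 * (‖A‖ ^ (p - 2) + ‖v‖ ^ (p - 2)) := by
      have := add_rpow_le_two_rpow_mul (norm_nonneg A) (norm_nonneg v)
        (by linarith : (0:ℝ) ≤ p - 2)
      rwa [show p - 2 - 1 = p - 3 by ring] at this
    have hv : ‖v‖ ≤ Real.sqrt Δ * (W * z) := by
      rw [hvdef, norm_smul, Real.norm_eq_abs, abs_of_nonneg (Real.sqrt_nonneg Δ)]
      refine mul_le_mul_of_nonneg_left ?_ (Real.sqrt_nonneg Δ)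
      calc ‖S (Z ω)‖ ≤ ‖S‖ * z := S.le_opNorm (Z ω)
        _ ≤ W * z := mul_le_mul_of_nonneg_right hSn hznn
    have hWz : 0 ≤ W * z := mul_nonneg hWnn hznn
    have hv2 : ‖v‖ ^ 2 ≤ Δ * (W * z) ^ 2 := by
      have := pow_le_pow_left₀ (norm_nonneg v) hv 2
      rwa [mul_pow, Real.sq_sqrt hΔ0.le] at this
    have hvp : ‖v‖ ^ p ≤ Δ * Δmax ^ (p / 2 - 1) * (W ^ p * z ^ p) := by
      have e1 : ‖v‖ ^ p ≤ (Real.sqrt Δ * (W * z)) ^ p :=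
        Real.rpow_le_rpow (norm_nonneg v) hv hp0.le
      have e2 : (Real.sqrt Δ * (W * z)) ^ p = Δ ^ (p / 2) * (W ^ p * z ^ p) := by
        rw [Real.mul_rpow (Real.sqrt_nonneg Δ) hWz, Real.mul_rpow hWnn hznn,
          Real.sqrt_eq_rpow, ← Real.rpow_mul hΔ0.le, show 1 / 2 * p = p / 2 by ring]
      have e3 : Δ ^ (p / 2) = Δ * Δ ^ (p / 2 - 1) := by
        have h := Real.rpow_add hΔ0 1 (p / 2 - 1)
        rw [Real.rpow_one] at h
        rw [← h]
        congr 1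
        ring
      have e4 : Δ ^ (p / 2 - 1) ≤ Δmax ^ (p / 2 - 1) :=
        Real.rpow_le_rpow hΔ0.le (by rw [hΔdef]; exact hΔ.le) (by linarith)
      have e5 : Δ ^ (p / 2) * (W ^ p * z ^ p) ≤ Δ * Δmax ^ (p / 2 - 1) * (W ^ p * z ^ p) := by
        rw [e3]
        have : Δ * Δ ^ (p / 2 - 1) ≤ Δ * Δmax ^ (p / 2 - 1) :=
          mul_le_mul_of_nonneg_left e4 hΔ0.le
        exact mul_le_mul_of_nonneg_right this
          (mul_nonneg (Real.rpow_nonneg hWnn p) (Real.rpow_nonneg hznn p))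
      calc ‖v‖ ^ p ≤ (Real.sqrt Δ * (W * z)) ^ p := e1
        _ = Δ ^ (p / 2) * (W ^ p * z ^ p) := e2
        _ ≤ Δ * Δmax ^ (p / 2 - 1) * (W ^ p * z ^ p) := e5
    have hvid : ‖v‖ ^ (p - 2) * ‖v‖ ^ 2 = ‖v‖ ^ p := by
      rw [← Real.rpow_two, ← Real.rpow_add' (norm_nonneg v) (by rw [sub_add_cancel]; exact hp0.ne' : p - 2 + 2 ≠ 0)]
      norm_num
    have hAp2nn : (0:ℝ) ≤ ‖A‖ ^ (p - 2) := Real.rpow_nonneg (norm_nonneg A) _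
    have hterm2 : p * (p - 1) / 2 * (‖A‖ + ‖v‖) ^ (p - 2) * ‖v‖ ^ 2
        ≤ K * (‖A‖ ^ (p - 2) * ‖v‖ ^ 2) + K * ‖v‖ ^ p := by
      have hh : (‖A‖ + ‖v‖) ^ (p - 2) * ‖v‖ ^ 2
          ≤ 2 ^ max (p - 3) 0 * (‖A‖ ^ (p - 2) + ‖v‖ ^ (p - 2)) * ‖v‖ ^ 2 :=
        mul_le_mul_of_nonneg_right h2 (sq_nonneg _)
      calc p * (p - 1) / 2 * (‖A‖ + ‖v‖) ^ (p - 2) * ‖v‖ ^ 2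
          = p * (p - 1) / 2 * ((‖A‖ + ‖v‖) ^ (p - 2) * ‖v‖ ^ 2) := by ring
        _ ≤ p * (p - 1) / 2 * (2 ^ max (p - 3) 0 * (‖A‖ ^ (p - 2) + ‖v‖ ^ (p - 2)) * ‖v‖ ^ 2) :=
            mul_le_mul_of_nonneg_left hh (by nlinarith)
        _ = K * (‖A‖ ^ (p - 2) * ‖v‖ ^ 2) + K * (‖v‖ ^ (p - 2) * ‖v‖ ^ 2) := by
            rw [hKdef]; ring
        _ = K * (‖A‖ ^ (p - 2) * ‖v‖ ^ 2) + K * ‖v‖ ^ p := by rw [hvid]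
    have hyoung := young_aux (norm_nonneg A) hWz hp
    have hterm2a : K * (‖A‖ ^ (p - 2) * ‖v‖ ^ 2)
        ≤ K * (Δ * ((p - 2) / p * ‖A‖ ^ p + 2 / p * (W ^ p * z ^ p))) := by
      refine mul_le_mul_of_nonneg_left ?_ hKnn
      have i1 : ‖A‖ ^ (p - 2) * ‖v‖ ^ 2 ≤ ‖A‖ ^ (p - 2) * (Δ * (W * z) ^ 2) :=
        mul_le_mul_of_nonneg_left hv2 hAp2nn
      have i3 : Δ * (‖A‖ ^ (p - 2) * (W * z) ^ 2)
          ≤ Δ * ((p - 2) / p * ‖A‖ ^ p + 2 / p * (W * z) ^ p) :=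
        mul_le_mul_of_nonneg_left hyoung hΔ0.le
      have i4 : (W * z) ^ p = W ^ p * z ^ p := Real.mul_rpow hWnn hznn
      calc ‖A‖ ^ (p - 2) * ‖v‖ ^ 2 ≤ ‖A‖ ^ (p - 2) * (Δ * (W * z) ^ 2) := i1
        _ = Δ * (‖A‖ ^ (p - 2) * (W * z) ^ 2) := by ring
        _ ≤ Δ * ((p - 2) / p * ‖A‖ ^ p + 2 / p * (W * z) ^ p) := i3
        _ = Δ * ((p - 2) / p * ‖A‖ ^ p + 2 / p * (W ^ p * z ^ p)) := by rw [i4]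
    have hterm2b : K * ‖v‖ ^ p ≤ K * (Δ * Δmax ^ (p / 2 - 1) * (W ^ p * z ^ p)) :=
      mul_le_mul_of_nonneg_left hvp hKnn
    have hfinal : ‖A + v‖ ^ p
        ≤ ‖A‖ ^ p + p * ‖A‖ ^ (p - 2) * (inner ℝ A v : ℝ)
          + (K * (Δ * ((p - 2) / p * ‖A‖ ^ p + 2 / p * (W ^ p * z ^ p)))
            + K * (Δ * Δmax ^ (p / 2 - 1) * (W ^ p * z ^ p))) := by
      linarith [h1, hterm2, hterm2a, hterm2b]
    have hre : ‖A‖ ^ p + p * ‖A‖ ^ (p - 2) * (inner ℝ A v : ℝ)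
          + (K * (Δ * ((p - 2) / p * ‖A‖ ^ p + 2 / p * (W ^ p * z ^ p)))
            + K * (Δ * Δmax ^ (p / 2 - 1) * (W ^ p * z ^ p)))
        = (1 + Δ * c₁ p) * ‖A‖ ^ p + (p * ‖A‖ ^ (p - 2)) * (inner ℝ A v : ℝ)
          + (Δ * c₂ p Δmax * W ^ p) * z ^ p := by
      rw [← hKc1, ← hKc2]
      ring
    rw [hre] at hfinal
    rw [← hGapp (Z ω)]
    exact hfinal
  -- integrability
  have hGint : Integrable (fun ω => G (Z ω)) P := G.integrable_comp hZ1
  have hGzero : (∫ ω, G (Z ω) ∂P) = 0 := by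
    rw [G.integral_comp_comm hZ1, hZ0, map_zero]
  set C1 : ℝ := (1 + Δ * c₁ p) * ‖A‖ ^ p with hC1def
  set C2 : ℝ := p * ‖A‖ ^ (p - 2) with hC2def
  set C3 : ℝ := Δ * c₂ p Δmax * W ^ p with hC3def
  have hgint : Integrable (fun ω => C1 + C2 * G (Z ω) + C3 * ‖Z ω‖ ^ p) P :=
    ((integrable_const C1).add (hGint.const_mul C2)).add (hZp.const_mul C3)
  have hfmeas : AEStronglyMeasurable (fun ω => ‖A + Real.sqrt Δ • S (Z ω)‖ ^ p) P := by
    have hm : Measurable fun ω => A + Real.sqrt Δ • S (Z ω) :=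
      measurable_const.add ((S.continuous.measurable.comp hZm).const_smul (Real.sqrt Δ))
    exact ((Real.continuous_rpow_const hp0.le).measurable.comp hm.norm).aestronglyMeasurable
  have hfint : Integrable (fun ω => ‖A + Real.sqrt Δ • S (Z ω)‖ ^ p) P := by
    refine hgint.mono' hfmeas (Filter.Eventually.of_forall fun ω => ?_)
    rw [Real.norm_eq_abs, abs_of_nonneg (Real.rpow_nonneg (norm_nonneg _) p)]
    exact hpt ω
  have hle : (∫ ω, ‖A + Real.sqrt Δ • S (Z ω)‖ ^ p ∂P)
      ≤ ∫ ω, (C1 + C2 * G (Z ω) + C3 * ‖Z ω‖ ^ p) ∂P :=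
    integral_mono hfint hgint hpt
  have hgval : (∫ ω, (C1 + C2 * G (Z ω) + C3 * ‖Z ω‖ ^ p) ∂P) = C1 + C3 * M := by
    have i12 : Integrable (fun ω => C1 + C2 * G (Z ω)) P :=
      (integrable_const C1).add (hGint.const_mul C2)
    have i3 : Integrable (fun ω => C3 * ‖Z ω‖ ^ p) P := hZp.const_mul C3
    rw [integral_add i12 i3, integral_add (integrable_const C1) (hGint.const_mul C2),
      integral_const, integral_const_mul, integral_const_mul, hGzero]
    simp [hMdef]
  rw [hgval] at hle
  -- bound on ‖A‖^p
  have hAle : ‖A‖ ≤ ‖x - x'‖ * (1 + Δ * Lb) := by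
    calc ‖A‖ ≤ ‖x - x'‖ + ‖Δ • (b tk x - b tk x')‖ := norm_add_le _ _
      _ = ‖x - x'‖ + Δ * ‖b tk x - b tk x'‖ := by
          rw [norm_smul, Real.norm_eq_abs, abs_of_nonneg hΔ0.le]
      _ ≤ ‖x - x'‖ + Δ * (Lb * ‖x - x'‖) := by
          have := mul_le_mul_of_nonneg_left (hb tk x x') hΔ0.le
          linarith
      _ = ‖x - x'‖ * (1 + Δ * Lb) := by ring
  have h1ΔLb : (0:ℝ) ≤ 1 + Δ * Lb := by nlinarith
  have hApow : ‖A‖ ^ p ≤ ‖x - x'‖ ^ p * Real.exp (Δ * Lb * p) := by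
    calc ‖A‖ ^ p ≤ (‖x - x'‖ * (1 + Δ * Lb)) ^ p :=
        Real.rpow_le_rpow (norm_nonneg A) hAle hp0.le
      _ = ‖x - x'‖ ^ p * (1 + Δ * Lb) ^ p := Real.mul_rpow (norm_nonneg _) h1ΔLb
      _ ≤ ‖x - x'‖ ^ p * Real.exp (Δ * Lb) ^ p := by
          refine mul_le_mul_of_nonneg_left ?_ (Real.rpow_nonneg (norm_nonneg _) p)
          exact Real.rpow_le_rpow h1ΔLb (by linarith [Real.add_one_le_exp (Δ * Lb)]) hp0.le
      _ = ‖x - x'‖ ^ p * Real.exp (Δ * Lb * p) := by rw [← Real.exp_mul]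
  have hWp : W ^ p = Lσ ^ p * ‖x - x'‖ ^ p := Real.mul_rpow hLσ (norm_nonneg _)
  -- final scalar computation
  have hDpnn : (0:ℝ) ≤ ‖x - x'‖ ^ p := Real.rpow_nonneg (norm_nonneg _) p
  have hLσpnn : (0:ℝ) ≤ Lσ ^ p := Real.rpow_nonneg hLσ p
  have hEpb : (1:ℝ) ≤ Real.exp (Δ * Lb * p) := by
    have h1 : (0:ℝ) ≤ Δ * Lb * p := mul_nonneg (mul_nonneg hΔ0.le hLb) hp0.le
    linarith [Real.add_one_le_exp (Δ * Lb * p)]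
  have hmain : C1 + C3 * M
      ≤ ‖x - x'‖ ^ p * Real.exp (Δ * (p * Lb + c₁ p + Lσ ^ p * c₂ p Δmax * M)) := by
    have s1 : C1 ≤ (1 + Δ * c₁ p) * (‖x - x'‖ ^ p * Real.exp (Δ * Lb * p)) := by
      rw [hC1def]
      refine mul_le_mul_of_nonneg_left hApow ?_
      have := mul_nonneg hΔ0.le hc1nn
      linarith
    have s2 : C3 * M = Δ * c₂ p Δmax * Lσ ^ p * M * ‖x - x'‖ ^ p := by
      rw [hC3def, hWp]; ring
    have key : (1 + Δ * c₁ p) * Real.exp (Δ * Lb * p) + Δ * c₂ p Δmax * Lσ ^ p * M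
        ≤ Real.exp (Δ * (p * Lb + c₁ p + Lσ ^ p * c₂ p Δmax * M)) := by
      have t0 : (0:ℝ) ≤ Δ * c₂ p Δmax * Lσ ^ p * M :=
        mul_nonneg (mul_nonneg (mul_nonneg hΔ0.le hc2nn) hLσpnn) hMnn
      have t1 : (1 + Δ * c₁ p) * Real.exp (Δ * Lb * p) + Δ * c₂ p Δmax * Lσ ^ p * M
          ≤ Real.exp (Δ * Lb * p) * (1 + Δ * c₁ p + Δ * c₂ p Δmax * Lσ ^ p * M) := by
        have hBE := mul_nonneg t0 (sub_nonneg.2 hEpb)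
        have hac := mul_nonneg hΔ0.le hc1nn
        nlinarith [hBE]
      have t2 : 1 + Δ * c₁ p + Δ * c₂ p Δmax * Lσ ^ p * M
          ≤ Real.exp (Δ * c₁ p + Δ * c₂ p Δmax * Lσ ^ p * M) := by
        linarith [Real.add_one_le_exp (Δ * c₁ p + Δ * c₂ p Δmax * Lσ ^ p * M)]
      have t3 : Real.exp (Δ * Lb * p) * (1 + Δ * c₁ p + Δ * c₂ p Δmax * Lσ ^ p * M)
          ≤ Real.exp (Δ * Lb * p) * Real.exp (Δ * c₁ p + Δ * c₂ p Δmax * Lσ ^ p * M) :=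
        mul_le_mul_of_nonneg_left t2 (Real.exp_nonneg _)
      have t4 : Real.exp (Δ * Lb * p) * Real.exp (Δ * c₁ p + Δ * c₂ p Δmax * Lσ ^ p * M)
          = Real.exp (Δ * (p * Lb + c₁ p + Lσ ^ p * c₂ p Δmax * M)) := by
        rw [← Real.exp_add]
        congr 1
        ring
      linarith
    calc C1 + C3 * M
        ≤ (1 + Δ * c₁ p) * (‖x - x'‖ ^ p * Real.exp (Δ * Lb * p))
          + Δ * c₂ p Δmax * Lσ ^ p * M * ‖x - x'‖ ^ p := by
          rw [s2] at *
          linarith [s1]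
      _ = ((1 + Δ * c₁ p) * Real.exp (Δ * Lb * p) + Δ * c₂ p Δmax * Lσ ^ p * M)
          * ‖x - x'‖ ^ p := by ring
      _ ≤ Real.exp (Δ * (p * Lb + c₁ p + Lσ ^ p * c₂ p Δmax * M)) * ‖x - x'‖ ^ p :=
          mul_le_mul_of_nonneg_right key hDpnn
      _ = ‖x - x'‖ ^ p * Real.exp (Δ * (p * Lb + c₁ p + Lσ ^ p * c₂ p Δmax * M)) := by ring
  have hgoal1 : (∫ ω, ‖euler Δ b σ tk x (Z ω) - euler Δ b σ tk x' (Z ω)‖ ^ p ∂P)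
      ≤ ‖x - x'‖ ^ p * Real.exp (Δ * (p * Lb + c₁ p + Lσ ^ p * c₂ p Δmax * M)) := by
    have heq : (fun ω => ‖euler Δ b σ tk x (Z ω) - euler Δ b σ tk x' (Z ω)‖ ^ p)
        = fun ω => ‖A + Real.sqrt Δ • S (Z ω)‖ ^ p :=
      funext fun ω => by rw [hdiff (Z ω)]
    calc (∫ ω, ‖euler Δ b σ tk x (Z ω) - euler Δ b σ tk x' (Z ω)‖ ^ p ∂P)
        = ∫ ω, ‖A + Real.sqrt Δ • S (Z ω)‖ ^ p ∂P := by rw [heq]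
      _ ≤ C1 + C3 * M := hle
      _ ≤ ‖x - x'‖ ^ p * Real.exp (Δ * (p * Lb + c₁ p + Lσ ^ p * c₂ p Δmax * M)) := hmain
  refine ⟨hgoal1, ?_⟩
  have hInn : 0 ≤ ∫ ω, ‖euler Δ b σ tk x (Z ω) - euler Δ b σ tk x' (Z ω)‖ ^ p ∂P :=
    integral_nonneg fun ω => Real.rpow_nonneg (norm_nonneg _) p
  have step := Real.rpow_le_rpow hInn hgoal1 (one_div_nonneg.2 hp0.le)
  have hrhs : (‖x - x'‖ ^ p * Real.exp (Δ * (p * Lb + c₁ p + Lσ ^ p * c₂ p Δmax * M))) ^ (1 / p)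
      = Real.exp (Δ * (p * Lb + c₁ p + Lσ ^ p * c₂ p Δmax * M) / p) * ‖x - x'‖ := by
    rw [Real.mul_rpow hDpnn (Real.exp_nonneg _), ← Real.rpow_mul (norm_nonneg _),
      mul_one_div_cancel hp0.ne', Real.rpow_one, ← Real.exp_mul, mul_one_div]
    ring
  rw [hrhs] at step
  exact step
end
end

section
/- Let p ∈ (1,2), set s = p+1, and let Δ ∈ (0, Δ_max). Assume b(t,·) and σ(t,·) are Lipschitz with constants [b]_Lip and [σ]_Lip ([σ]_Lip with respect to the operator norm), and let Z be an ℝ^q-valued random vector with E[Z] = 0 and E|Z|^s < ∞. Then for all x, x' ∈ ℝ^d and every k: E| E_k(x,Z) − E_k(x',Z) |^p ≤ |x−x'|^p · exp( Δ( c_s^{(1)} + s[b]_Lip + c^{(2)}_{s,Δ_max} [σ]_Lip^s E|Z|^s ) ). In particular the Euler operator E_k(·,Z) is L^p-Lipschitz with constant exp( Δ( c_s^{(1)} + s[b]_Lip + c^{(2)}_{s,Δ_max} [σ]_Lip^s E|Z|^s )/p ). -/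
open MeasureTheory Real

noncomputable section

open Set Filter

namespace EulerAux

lemma monoOn {D : Set ℝ} (hD : Convex ℝ D) {F F' : ℝ → ℝ}
    (hd : ∀ t ∈ D, HasDerivAt F (F' t) t)
    (h0 : ∀ t ∈ interior D, 0 ≤ F' t) : MonotoneOn F D := by
  apply monotoneOn_of_deriv_nonneg hD
  · exact fun t ht => (hd t ht).continuousAt.continuousWithinAt
  · exact fun t ht => ((hd t (interior_subset ht)).differentiableAt).differentiableWithinAt
  · intro t ht
    rw [(hd t (interior_subset ht)).deriv]
    exact h0 t ht

lemma add_rpow_le {x y α : ℝ} (hx : 0 ≤ x) (hy : 0 ≤ y) (h0 : 0 ≤ α) (h1 : α ≤ 1) :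
    (x + y) ^ α ≤ x ^ α + y ^ α := by
  have h := NNReal.rpow_add_le_add_rpow x.toNNReal y.toNNReal h0 h1
  have h2 := NNReal.coe_le_coe.2 h
  push_cast [NNReal.coe_rpow, Real.coe_toNNReal x hx, Real.coe_toNNReal y hy] at h2
  exact h2

lemma sq_rpow_half {x : ℝ} (hx : 0 ≤ x) (s : ℝ) : (x ^ 2) ^ (s / 2) = x ^ s := by
  rw [← Real.rpow_natCast x 2, ← Real.rpow_mul hx]
  congr 1
  ring

lemma two_rpow_bound {x y s : ℝ} (hx : 0 ≤ x) (hy : 0 ≤ y) (hs : 0 ≤ s) :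
    (x + y) ^ s ≤ 2 ^ s * (x ^ s + y ^ s) := by
  have h1 : x + y ≤ 2 * max x y := by
    rcases le_total x y with h | h
    · simp [max_eq_right h]; linarith
    · simp [max_eq_left h]; linarith
  have h2 : (x + y) ^ s ≤ (2 * max x y) ^ s :=
    Real.rpow_le_rpow (by positivity) h1 hs
  have h3 : (2 * max x y) ^ s = 2 ^ s * (max x y) ^ s :=
    Real.mul_rpow (by norm_num) (le_max_of_le_left hx)
  have h4 : (max x y) ^ s ≤ x ^ s + y ^ s := by
    rcases le_total x y with h | h
    · rw [max_eq_right h]; nlinarith [Real.rpow_nonneg hx s]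
    · rw [max_eq_left h]; nlinarith [Real.rpow_nonneg hy s]
  calc (x + y) ^ s ≤ 2 ^ s * (max x y) ^ s := by rw [← h3]; exact h2
    _ ≤ 2 ^ s * (x ^ s + y ^ s) := by
        have : (0:ℝ) ≤ 2 ^ s := Real.rpow_nonneg (by norm_num) s
        nlinarith

lemma rpow_le_one_add {x p s : ℝ} (hx : 0 ≤ x) (hp : 0 ≤ p) (hps : p ≤ s) :
    x ^ p ≤ 1 + x ^ s := by
  rcases le_total x 1 with h | h
  · have : x ^ p ≤ 1 := Real.rpow_le_one hx h hp
    have := Real.rpow_nonneg hx s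
    linarith
  · have : x ^ p ≤ x ^ s := Real.rpow_le_rpow_of_exponent_le h hps
    linarith

lemma young {s x y : ℝ} (hs2 : 2 ≤ s) (hx : 0 ≤ x) (hy : 0 ≤ y) :
    x ^ (s - 2) * y ^ 2 ≤ (s - 2) / s * x ^ s + 2 / s * y ^ s := by
  have hs0 : (0:ℝ) < s := by linarith
  have h := Real.geom_mean_le_arith_mean2_weighted
    (w₁ := (s-2)/s) (w₂ := 2/s) (p₁ := x ^ s) (p₂ := y ^ s)
    (div_nonneg (by linarith) hs0.le) (by positivity)
    (Real.rpow_nonneg hx s) (Real.rpow_nonneg hy s)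
    (by field_simp; ring)
  have e1 : (x ^ s) ^ ((s-2)/s) = x ^ (s-2) := by
    rw [← Real.rpow_mul hx]
    congr 1
    field_simp
  have e2 : (y ^ s) ^ (2/s) = y ^ (2:ℝ) := by
    rw [← Real.rpow_mul hy]
    congr 1
    field_simp
  rw [e1, e2] at h
  rwa [show y ^ (2:ℝ) = y ^ 2 by rw [← Real.rpow_natCast y 2]; norm_num] at h

lemma hasDerivAt_one_add_rpow {r : ℝ} (hr : 1 ≤ r) (t : ℝ) :
    HasDerivAt (fun t : ℝ => (1 + t) ^ r) (r * (1 + t) ^ (r - 1)) t := by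
  have h1 : HasDerivAt (fun t : ℝ => 1 + t) 1 t := (hasDerivAt_id t).const_add 1
  have h2 := (Real.hasDerivAt_rpow_const (x := 1 + t) (p := r) (Or.inr hr)).comp t h1
  rw [mul_one] at h2
  exact h2

lemma hasDerivAt_mid {s : ℝ} (hs2 : 2 ≤ s) (u : ℝ) :
    HasDerivAt (fun v : ℝ => 2 * v + s * v ^ (s - 1)) (2 + s * ((s - 1) * u ^ (s - 2))) u := by
  have ha : HasDerivAt (fun v : ℝ => 2 * v) 2 u := by
    simpa using (hasDerivAt_id u).const_mul 2
  have hb := (Real.hasDerivAt_rpow_const (x := u) (p := s - 1)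
    (Or.inr (by linarith))).const_mul s
  rw [show s - 1 - 1 = s - 2 by ring] at hb
  exact ha.add hb

lemma x_mul_sq_rpow {s x : ℝ} (hs2 : 2 ≤ s) (hx : 0 ≤ x) :
    (x ^ 2) ^ (s / 2 - 1) * x = x ^ (s - 1) := by
  rcases eq_or_lt_of_le hx with h | h
  · rw [← h]
    simp [Real.zero_rpow (show s - 1 ≠ 0 by linarith)]
  · have e1 : (x ^ 2) ^ (s / 2 - 1) = x ^ (s - 2) := by
      rw [← Real.rpow_natCast x 2, ← Real.rpow_mul hx]
      congr 1
      ring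
    rw [e1, ← Real.rpow_add_one (ne_of_gt h)]
    congr 1
    ring

lemma hasDerivAt_core {s : ℝ} (hs2 : 2 ≤ s) (t : ℝ) :
    HasDerivAt (fun t : ℝ => ((1 - t) ^ 2) ^ (s / 2))
      (s / 2 * ((1 - t) ^ 2) ^ (s / 2 - 1) * (-(2 * (1 - t)))) t := by
  have h1 : HasDerivAt (fun t : ℝ => 1 - t) (-1) t := (hasDerivAt_id t).const_sub 1
  have hinner : HasDerivAt (fun t : ℝ => (1 - t) ^ 2) (-(2 * (1 - t))) t := by
    have := (hasDerivAt_pow 2 (1 - t)).comp t h1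
    refine this.congr_deriv ?_
    push_cast
    ring
  have houter := (Real.hasDerivAt_rpow_const (x := (1 - t) ^ 2) (p := s / 2)
    (Or.inr (by linarith))).comp t hinner
  exact houter

private def Ga (s t : ℝ) : ℝ :=
  1 - s * t + s * (s - 1) / 2 * (t ^ 2 + t ^ s) - ((1 - t) ^ 2) ^ (s / 2)
private def Ga1 (s t : ℝ) : ℝ :=
  -s + s * (s - 1) / 2 * (2 * t + s * t ^ (s - 1)) + s * (1 - t) ^ (s - 1)
private def Ga2 (s t : ℝ) : ℝ :=
  s * (s - 1) / 2 * (2 + s * ((s - 1) * t ^ (s - 2))) - s * ((s - 1) * (1 - t) ^ (s - 2))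
private def Ha1 (s t : ℝ) : ℝ :=
  -s + s * (s - 1) / 2 * (2 * t + s * t ^ (s - 1)) - s * (t - 1) ^ (s - 1)

lemma hasDerivAt_tsq_ts {s : ℝ} (hs1 : 1 ≤ s) (u : ℝ) :
    HasDerivAt (fun v : ℝ => v ^ 2 + v ^ s) (2 * u + s * u ^ (s - 1)) u := by
  have hp : HasDerivAt (fun v : ℝ => v ^ 2) (2 * u) u := by
    simpa using hasDerivAt_pow 2 u
  exact hp.add (Real.hasDerivAt_rpow_const (Or.inr hs1))

lemma hasDerivAt_Ga_le {s : ℝ} (hs2 : 2 ≤ s) {t : ℝ} (ht : t ≤ 1) :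
    HasDerivAt (Ga s) (Ga1 s t) t := by
  have h1 : HasDerivAt (fun v : ℝ => 1 - s * v) (-s) t := by
    simpa using ((hasDerivAt_id t).const_mul s).const_sub 1
  have h := (h1.add ((hasDerivAt_tsq_ts (s := s) (by linarith) t).const_mul
    (s * (s - 1) / 2))).sub (hasDerivAt_core hs2 t)
  have e : s / 2 * ((1 - t) ^ 2) ^ (s / 2 - 1) * (-(2 * (1 - t))) = -(s * (1 - t) ^ (s - 1)) := by
    rw [← x_mul_sq_rpow hs2 (by linarith : (0:ℝ) ≤ 1 - t)]
    ring
  rw [show Ga1 s t = -s + s * (s - 1) / 2 * (2 * t + s * t ^ (s - 1))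
      - s / 2 * ((1 - t) ^ 2) ^ (s / 2 - 1) * (-(2 * (1 - t))) by rw [e]; simp only [Ga1]; ring]
  exact h

lemma hasDerivAt_Ga_ge {s : ℝ} (hs2 : 2 ≤ s) {t : ℝ} (ht : 1 ≤ t) :
    HasDerivAt (Ga s) (Ha1 s t) t := by
  have h1 : HasDerivAt (fun v : ℝ => 1 - s * v) (-s) t := by
    simpa using ((hasDerivAt_id t).const_mul s).const_sub 1
  have h := (h1.add ((hasDerivAt_tsq_ts (s := s) (by linarith) t).const_mul
    (s * (s - 1) / 2))).sub (hasDerivAt_core hs2 t)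
  have e : s / 2 * ((1 - t) ^ 2) ^ (s / 2 - 1) * (-(2 * (1 - t))) = s * (t - 1) ^ (s - 1) := by
    rw [show ((1 - t) ^ 2 : ℝ) = (t - 1) ^ 2 by ring,
      ← x_mul_sq_rpow hs2 (by linarith : (0:ℝ) ≤ t - 1)]
    ring
  rw [show Ha1 s t = -s + s * (s - 1) / 2 * (2 * t + s * t ^ (s - 1))
      - s / 2 * ((1 - t) ^ 2) ^ (s / 2 - 1) * (-(2 * (1 - t))) by rw [e]; simp only [Ha1]]
  exact h

lemma hasDerivAt_Ga1 {s : ℝ} (hs2 : 2 ≤ s) (t : ℝ) :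
    HasDerivAt (Ga1 s) (Ga2 s t) t := by
  have h1 : HasDerivAt (fun v : ℝ => 1 - v) (-1) t := (hasDerivAt_id t).const_sub 1
  have h3 := ((Real.hasDerivAt_rpow_const (x := 1 - t) (p := s - 1)
    (Or.inr (by linarith))).comp t h1).const_mul s
  have h := ((hasDerivAt_const t (-s)).add
    ((hasDerivAt_mid hs2 t).const_mul (s * (s - 1) / 2))).add h3
  rw [show Ga2 s t = 0 + s * (s - 1) / 2 * (2 + s * ((s - 1) * t ^ (s - 2)))
      + s * ((s - 1) * (1 - t) ^ (s - 1 - 1) * -1) by simp [Ga2]; rw [show s - 1 - 1 = s - 2 by ring]; ring]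
  exact h
private def Fa (s t : ℝ) : ℝ := 1 + s * t + s * (s - 1) / 2 * (t ^ 2 + t ^ s) - (1 + t) ^ s
private def Fa1 (s t : ℝ) : ℝ :=
  s + s * (s - 1) / 2 * (2 * t + s * t ^ (s - 1)) - s * (1 + t) ^ (s - 1)
private def Fa2 (s t : ℝ) : ℝ :=
  s * (s - 1) / 2 * (2 + s * ((s - 1) * t ^ (s - 2))) - s * ((s - 1) * (1 + t) ^ (s - 2))

lemma hasDerivAt_Fa {s : ℝ} (hs2 : 2 ≤ s) (u : ℝ) : HasDerivAt (Fa s) (Fa1 s u) u := by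
  have hs1 : (1:ℝ) ≤ s := by linarith
  have h1 : HasDerivAt (fun v : ℝ => 1 + s * v) s u := by
    simpa using ((hasDerivAt_id u).const_mul s).const_add 1
  have h2 : HasDerivAt (fun v : ℝ => v ^ 2 + v ^ s) (2 * u + s * u ^ (s - 1)) u := by
    have hp : HasDerivAt (fun v : ℝ => v ^ 2) (2 * u) u := by
      simpa using hasDerivAt_pow 2 u
    exact hp.add (Real.hasDerivAt_rpow_const (Or.inr hs1))
  exact (h1.add (h2.const_mul (s * (s - 1) / 2))).sub (hasDerivAt_one_add_rpow hs1 u)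

lemma hasDerivAt_Fa1 {s : ℝ} (hs2 : 2 ≤ s) (u : ℝ) : HasDerivAt (Fa1 s) (Fa2 s u) u := by
  have hs1 : (1:ℝ) ≤ s - 1 := by linarith
  have h2 : HasDerivAt (fun v : ℝ => 2 * v + s * v ^ (s - 1))
      (2 + s * ((s - 1) * u ^ (s - 2))) u := by
    have ha : HasDerivAt (fun v : ℝ => 2 * v) 2 u := by
      simpa using (hasDerivAt_id u).const_mul 2
    have hb := (Real.hasDerivAt_rpow_const (x := u) (p := s - 1) (Or.inr hs1)).const_mul s
    rw [show s - 1 - 1 = s - 2 by ring] at hb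
    exact ha.add hb
  have h3 := hasDerivAt_one_add_rpow hs1 u
  rw [show s - 1 - 1 = s - 2 by ring] at h3
  have h5 : Fa2 s u
      = 0 + s * (s - 1) / 2 * (2 + s * ((s - 1) * u ^ (s - 2))) - s * ((s - 1) * (1 + u) ^ (s - 2)) := by
    simp [Fa2]
  rw [show Fa1 s = fun v => s + s * (s - 1) / 2 * (2 * v + s * v ^ (s - 1)) - s * (1 + v) ^ (s - 1) from rfl, h5]
  exact ((hasDerivAt_const u s).add (h2.const_mul (s * (s - 1) / 2))).sub (h3.const_mul s)

lemma oneVar1 {s : ℝ} (hs2 : 2 ≤ s) (hs3 : s ≤ 3) {t : ℝ} (ht : 0 ≤ t) :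
    (1 + t) ^ s ≤ 1 + s * t + s * (s - 1) / 2 * (t ^ 2 + t ^ s) := by
  have hK1 : 1 ≤ s * (s - 1) / 2 := by nlinarith
  have hFa2 : ∀ u ∈ interior (Ici (0:ℝ)), 0 ≤ Fa2 s u := by
    intro u hu
    rw [interior_Ici] at hu
    have hu0 : (0:ℝ) < u := hu
    have hb : (1 + u) ^ (s - 2) ≤ 1 + u ^ (s - 2) := by
      simpa [Real.one_rpow] using
        add_rpow_le zero_le_one hu0.le (by linarith : (0:ℝ) ≤ s - 2) (by linarith)
    have h1 : (0:ℝ) ≤ u ^ (s - 2) := Real.rpow_nonneg hu0.le _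
    have hss : (0:ℝ) ≤ s * (s - 1) := by nlinarith
    simp only [Fa2]
    nlinarith [mul_le_mul_of_nonneg_left hb hss, mul_nonneg (mul_nonneg hss h1) (by linarith : (0:ℝ) ≤ s * (s-1)/2 - 1)]
  have hF1mono : MonotoneOn (Fa1 s) (Ici 0) :=
    monoOn (convex_Ici 0) (fun u _ => hasDerivAt_Fa1 hs2 u) hFa2
  have hF10 : Fa1 s 0 = 0 := by
    simp [Fa1, Real.zero_rpow (show s - 1 ≠ 0 by linarith), Real.one_rpow]
  have hFa1 : ∀ u ∈ interior (Ici (0:ℝ)), 0 ≤ Fa1 s u := by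
    intro u hu
    rw [interior_Ici] at hu
    have := hF1mono (self_mem_Ici) (le_of_lt hu : (0:ℝ) ≤ u) (le_of_lt hu)
    rwa [hF10] at this
  have hFmono : MonotoneOn (Fa s) (Ici 0) :=
    monoOn (convex_Ici 0) (fun u _ => hasDerivAt_Fa hs2 u) hFa1
  have hF0 : Fa s 0 = 0 := by
    simp [Fa, Real.zero_rpow (show s ≠ 0 by linarith), Real.one_rpow]
  have := hFmono self_mem_Ici ht ht
  rw [hF0] at this
  simp only [Fa] at this
  linarith
lemma oneVar2 {s : ℝ} (hs2 : 2 ≤ s) (hs3 : s ≤ 3) {t : ℝ} (ht : 0 ≤ t) :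
    ((1 - t) ^ 2) ^ (s / 2) + s * t ≤ 1 + s * (s - 1) / 2 * (t ^ 2 + t ^ s) := by
  have hK1 : 1 ≤ s * (s - 1) / 2 := by nlinarith
  suffices h : 0 ≤ Ga s t by simp only [Ga] at h; linarith
  rcases le_total t 1 with h1 | h1
  · have hGa2 : ∀ u ∈ interior (Icc (0:ℝ) 1), 0 ≤ Ga2 s u := by
      intro u hu
      rw [interior_Icc] at hu
      obtain ⟨hu0, hu1⟩ := hu
      have hb : (1 - u) ^ (s - 2) ≤ 1 :=
        Real.rpow_le_one (by linarith) (by linarith) (by linarith)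
      have h1' : (0:ℝ) ≤ u ^ (s - 2) := Real.rpow_nonneg hu0.le _
      have hss : (0:ℝ) ≤ s * (s - 1) := by nlinarith
      simp only [Ga2]
      nlinarith [mul_le_mul_of_nonneg_left hb hss,
        mul_nonneg (mul_nonneg hss h1') (by linarith : (0:ℝ) ≤ s * (s - 1) / 2)]
    have hGa1mono : MonotoneOn (Ga1 s) (Icc 0 1) :=
      monoOn (convex_Icc 0 1) (fun u _ => hasDerivAt_Ga1 hs2 u) hGa2
    have hGa10 : Ga1 s 0 = 0 := by
      rw [show Ga1 s 0 = -s + s * (s - 1) / 2 * (2 * 0 + s * (0:ℝ) ^ (s - 1))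
        + s * (1 - 0:ℝ) ^ (s - 1) from rfl,
        Real.zero_rpow (show s - 1 ≠ 0 by intro hc; linarith)]
      norm_num
    have hGa1nn : ∀ u ∈ interior (Icc (0:ℝ) 1), 0 ≤ Ga1 s u := by
      intro u hu
      rw [interior_Icc] at hu
      have := hGa1mono (left_mem_Icc.2 zero_le_one) ⟨hu.1.le, hu.2.le⟩ hu.1.le
      rwa [hGa10] at this
    have hGamono : MonotoneOn (Ga s) (Icc 0 1) :=
      monoOn (convex_Icc 0 1) (fun u hu => hasDerivAt_Ga_le hs2 hu.2) hGa1nn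
    have h0m := hGamono (left_mem_Icc.2 zero_le_one) ⟨ht, h1⟩ ht
    have hGa0 : Ga s 0 = 0 := by
      rw [show Ga s 0 = 1 - s * 0 + s * (s - 1) / 2 * ((0:ℝ) ^ 2 + (0:ℝ) ^ s)
        - (((1:ℝ) - 0) ^ 2) ^ (s / 2) from rfl,
        Real.zero_rpow (show s ≠ 0 by intro hc; linarith)]
      norm_num
    rw [hGa0] at h0m
    exact h0m
  · have hHa1 : ∀ u ∈ interior (Ici (1:ℝ)), 0 ≤ Ha1 s u := by
      intro u hu
      rw [interior_Ici] at hu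
      have hu1 : (1:ℝ) < u := hu
      have hle : (u - 1) ^ (s - 1) ≤ u ^ (s - 1) :=
        Real.rpow_le_rpow (by linarith) (by linarith) (by linarith)
      have hge : (1:ℝ) ≤ u ^ (s - 1) := by
        have := Real.rpow_le_rpow zero_le_one hu1.le (by linarith : (0:ℝ) ≤ s - 1)
        rwa [Real.one_rpow] at this
      simp only [Ha1]
      nlinarith [mul_le_mul_of_nonneg_left hle (by linarith : (0:ℝ) ≤ s),
        mul_nonneg (mul_nonneg (by linarith : (0:ℝ) ≤ s * (s - 1) / 2 - 1)
          (by linarith : (0:ℝ) ≤ s)) (by linarith : (0:ℝ) ≤ u ^ (s - 1) - 1),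
        mul_nonneg (by nlinarith : (0:ℝ) ≤ s * (s - 1)) (by linarith : (0:ℝ) ≤ u - 1),
        mul_nonneg (by linarith : (0:ℝ) ≤ s) (by linarith : (0:ℝ) ≤ s - 2)]
    have hHmono : MonotoneOn (Ga s) (Ici 1) :=
      monoOn (convex_Ici 1) (fun u hu => hasDerivAt_Ga_ge hs2 hu) hHa1
    have h1m := hHmono self_mem_Ici h1 h1
    have hGa1v : 0 ≤ Ga s 1 := by
      rw [show Ga s 1 = 1 - s * 1 + s * (s - 1) / 2 * ((1:ℝ) ^ 2 + (1:ℝ) ^ s)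
        - (((1:ℝ) - 1) ^ 2) ^ (s / 2) from rfl, Real.one_rpow]
      rw [show (((1:ℝ) - 1) ^ 2 : ℝ) = 0 by norm_num,
        Real.zero_rpow (show s / 2 ≠ 0 by intro hc; nlinarith)]
      nlinarith
    linarith

lemma rpow_split_one {a s : ℝ} (ha : 0 < a) : a ^ s = a ^ (s - 1) * a := by
  rw [← Real.rpow_add_one (ne_of_gt ha)]
  congr 1
  ring

lemma rpow_split_two {a s : ℝ} (ha : 0 < a) : a ^ s = a ^ (s - 2) * a ^ 2 := by
  rw [← Real.rpow_natCast a 2, ← Real.rpow_add ha]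
  congr 1
  ring

lemma scalar_plus {s : ℝ} (hs2 : 2 ≤ s) (hs3 : s ≤ 3) {a b : ℝ} (ha : 0 ≤ a) (hb : 0 ≤ b) :
    (a + b) ^ s ≤ a ^ s + s * a ^ (s - 1) * b
      + s * (s - 1) / 2 * (a ^ (s - 2) * b ^ 2 + b ^ s) := by
  have hK1 : 1 ≤ s * (s - 1) / 2 := by nlinarith
  rcases eq_or_lt_of_le ha with h | h
  · rw [← h]
    rw [Real.zero_rpow (show s ≠ 0 by intro hc; linarith),
      Real.zero_rpow (show s - 1 ≠ 0 by intro hc; linarith), zero_add]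
    have hbs : 0 ≤ b ^ s := Real.rpow_nonneg hb _
    have h2 : 0 ≤ (0:ℝ) ^ (s - 2) * b ^ 2 :=
      mul_nonneg (Real.rpow_nonneg le_rfl _) (sq_nonneg b)
    nlinarith
  · have ht : 0 ≤ b / a := div_nonneg hb h.le
    have h1 := oneVar1 hs2 hs3 ht
    have h2 := mul_le_mul_of_nonneg_left h1 (Real.rpow_nonneg ha s)
    have e1 : a ^ s * (1 + b / a) ^ s = (a + b) ^ s := by
      rw [← Real.mul_rpow ha (by positivity)]
      congr 1
      field_simp
    have e2 : a ^ s * (b / a) = a ^ (s - 1) * b := by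
      rw [rpow_split_one h]
      field_simp
      try ring
    have e3 : a ^ s * (b / a) ^ 2 = a ^ (s - 2) * b ^ 2 := by
      rw [rpow_split_two h]
      field_simp
      try ring
    have e4 : a ^ s * (b / a) ^ s = b ^ s := by
      rw [← Real.mul_rpow ha ht]
      congr 1
      field_simp
    calc (a + b) ^ s = a ^ s * (1 + b / a) ^ s := e1.symm
      _ ≤ a ^ s * (1 + s * (b / a) + s * (s - 1) / 2 * ((b / a) ^ 2 + (b / a) ^ s)) := h2
      _ = a ^ s + s * (a ^ s * (b / a))
          + s * (s - 1) / 2 * (a ^ s * (b / a) ^ 2 + a ^ s * (b / a) ^ s) := by ring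
      _ = a ^ s + s * (a ^ (s - 1) * b)
          + s * (s - 1) / 2 * (a ^ (s - 2) * b ^ 2 + b ^ s) := by rw [e2, e3, e4]
      _ = a ^ s + s * a ^ (s - 1) * b
          + s * (s - 1) / 2 * (a ^ (s - 2) * b ^ 2 + b ^ s) := by ring

lemma scalar_minus {s : ℝ} (hs2 : 2 ≤ s) (hs3 : s ≤ 3) {a b : ℝ} (ha : 0 ≤ a) (hb : 0 ≤ b) :
    ((a - b) ^ 2) ^ (s / 2) + s * a ^ (s - 1) * b
      ≤ a ^ s + s * (s - 1) / 2 * (a ^ (s - 2) * b ^ 2 + b ^ s) := by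
  have hK1 : 1 ≤ s * (s - 1) / 2 := by nlinarith
  rcases eq_or_lt_of_le ha with h | h
  · rw [← h]
    rw [Real.zero_rpow (show s ≠ 0 by intro hc; linarith),
      Real.zero_rpow (show s - 1 ≠ 0 by intro hc; linarith),
      show ((0:ℝ) - b) ^ 2 = b ^ 2 by ring, sq_rpow_half hb]
    have hbs : 0 ≤ b ^ s := Real.rpow_nonneg hb _
    have h2 : 0 ≤ (0:ℝ) ^ (s - 2) * b ^ 2 :=
      mul_nonneg (Real.rpow_nonneg le_rfl _) (sq_nonneg b)
    nlinarith
  · have ht : 0 ≤ b / a := div_nonneg hb h.le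
    have h1 := oneVar2 hs2 hs3 ht
    have h2 := mul_le_mul_of_nonneg_left h1 (Real.rpow_nonneg ha s)
    have e5 : a ^ s * ((1 - b / a) ^ 2) ^ (s / 2) = ((a - b) ^ 2) ^ (s / 2) := by
      rw [← sq_rpow_half ha s, ← Real.mul_rpow (sq_nonneg a) (sq_nonneg _)]
      congr 1
      field_simp
      try ring
    have e2 : a ^ s * (b / a) = a ^ (s - 1) * b := by
      rw [rpow_split_one h]
      field_simp
      try ring
    have e3 : a ^ s * (b / a) ^ 2 = a ^ (s - 2) * b ^ 2 := by
      rw [rpow_split_two h]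
      field_simp
      try ring
    have e4 : a ^ s * (b / a) ^ s = b ^ s := by
      rw [← Real.mul_rpow ha ht]
      congr 1
      field_simp
    have h3 : a ^ s * (((1 - b / a) ^ 2) ^ (s / 2) + s * (b / a))
        ≤ a ^ s * (1 + s * (s - 1) / 2 * ((b / a) ^ 2 + (b / a) ^ s)) := h2
    have h4 : a ^ s * (((1 - b / a) ^ 2) ^ (s / 2) + s * (b / a))
        = ((a - b) ^ 2) ^ (s / 2) + s * a ^ (s - 1) * b := by
      rw [mul_add, e5, show a ^ s * (s * (b / a)) = s * (a ^ s * (b / a)) by ring, e2]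
      ring
    have h5 : a ^ s * (1 + s * (s - 1) / 2 * ((b / a) ^ 2 + (b / a) ^ s))
        = a ^ s + s * (s - 1) / 2 * (a ^ (s - 2) * b ^ 2 + b ^ s) := by
      rw [show a ^ s * (1 + s * (s - 1) / 2 * ((b / a) ^ 2 + (b / a) ^ s))
        = a ^ s + s * (s - 1) / 2 * (a ^ s * (b / a) ^ 2 + a ^ s * (b / a) ^ s) by ring,
        e3, e4]
    rw [h4, h5] at h3
    exact h3

lemma scalar_main {s : ℝ} (hs2 : 2 ≤ s) (hs3 : s ≤ 3) {a b c : ℝ}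
    (ha : 0 ≤ a) (hb : 0 ≤ b) (hc : |c| ≤ a * b) :
    (a ^ 2 + 2 * c + b ^ 2) ^ (s / 2)
      ≤ a ^ s + s * a ^ (s - 2) * c
        + s * (s - 1) / 2 * (a ^ (s - 2) * b ^ 2 + b ^ s) := by
  have hK1 : 1 ≤ s * (s - 1) / 2 := by nlinarith
  by_cases hab : a * b = 0
  · have hc0 : c = 0 := by
      have h0 : |c| ≤ 0 := by rw [hab] at hc; exact hc
      exact abs_eq_zero.mp (le_antisymm h0 (abs_nonneg c))
    rcases mul_eq_zero.mp hab with h | h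
    · subst h
      rw [hc0]
      have e : ((0:ℝ) ^ 2 + 2 * 0 + b ^ 2 : ℝ) = b ^ 2 := by norm_num
      rw [e, sq_rpow_half hb, Real.zero_rpow (show s ≠ 0 by intro hcc; linarith)]
      have hbs : 0 ≤ b ^ s := Real.rpow_nonneg hb _
      have h2 : 0 ≤ (0:ℝ) ^ (s - 2) * b ^ 2 :=
        mul_nonneg (Real.rpow_nonneg le_rfl _) (sq_nonneg b)
      nlinarith
    · subst h
      rw [hc0]
      have e : (a ^ 2 + 2 * 0 + (0:ℝ) ^ 2 : ℝ) = a ^ 2 := by norm_num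
      rw [e, sq_rpow_half ha, Real.zero_rpow (show s ≠ 0 by intro hcc; linarith)]
      have h2 : 0 ≤ a ^ (s - 2) * (0:ℝ) ^ 2 := by norm_num
      nlinarith [Real.rpow_nonneg ha (s - 2)]
  · have hm0 : 0 < a * b := lt_of_le_of_ne (mul_nonneg ha hb) (Ne.symm hab)
    have ha0 : 0 < a := by
      rcases eq_or_lt_of_le ha with h | h
      · exfalso; rw [← h] at hm0; simp at hm0
      · exact h
    have hb0 : 0 < b := by
      rcases eq_or_lt_of_le hb with h | h
      · exfalso; rw [← h] at hm0; simp at hm0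
      · exact h
    set θ : ℝ := (a * b - c) / (2 * (a * b)) with hθ
    have hc1 : -(a * b) ≤ c := neg_le_of_abs_le hc
    have hc2 : c ≤ a * b := le_of_abs_le hc
    have hθ0 : 0 ≤ θ := div_nonneg (by linarith) (by linarith)
    have h1θ : 1 - θ = (a * b + c) / (2 * (a * b)) := by
      rw [hθ]; field_simp; ring
    have h1θ0 : 0 ≤ 1 - θ := by rw [h1θ]; exact div_nonneg (by linarith) (by linarith)
    have hcx := (convexOn_rpow (show (1:ℝ) ≤ s / 2 by linarith)).2
      (Set.mem_Ici.2 (sq_nonneg (a - b))) (Set.mem_Ici.2 (sq_nonneg (a + b)))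
      hθ0 h1θ0 (by ring)
    simp only [smul_eq_mul] at hcx
    have hcomb : θ * (a - b) ^ 2 + (1 - θ) * (a + b) ^ 2 = a ^ 2 + 2 * c + b ^ 2 := by
      rw [hθ]; field_simp; ring
    rw [hcomb] at hcx
    have hBplus := scalar_plus hs2 hs3 ha hb
    have hBminus := scalar_minus hs2 hs3 ha hb
    have hplus' : ((a + b) ^ 2) ^ (s / 2)
        ≤ a ^ s + s * (s - 1) / 2 * (a ^ (s - 2) * b ^ 2 + b ^ s) + s * a ^ (s - 1) * b := by
      rw [sq_rpow_half (by linarith : (0:ℝ) ≤ a + b)]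
      linarith
    have hminus' : ((a - b) ^ 2) ^ (s / 2)
        ≤ a ^ s + s * (s - 1) / 2 * (a ^ (s - 2) * b ^ 2 + b ^ s) - s * a ^ (s - 1) * b := by
      linarith
    set B : ℝ := a ^ s + s * (s - 1) / 2 * (a ^ (s - 2) * b ^ 2 + b ^ s) with hB
    set Y : ℝ := s * a ^ (s - 1) * b with hY
    have c1 : θ * (((a - b) ^ 2) ^ (s / 2)) ≤ θ * (B - Y) :=
      mul_le_mul_of_nonneg_left hminus' hθ0
    have c2 : (1 - θ) * (((a + b) ^ 2) ^ (s / 2)) ≤ (1 - θ) * (B + Y) :=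
      mul_le_mul_of_nonneg_left hplus' h1θ0
    have hfin : θ * (B - Y) + (1 - θ) * (B + Y) = B + s * a ^ (s - 2) * c := by
      have e1 : 1 - 2 * θ = c / (a * b) := by
        rw [hθ]; field_simp; ring
      have e2 : θ * (B - Y) + (1 - θ) * (B + Y) = B + (1 - 2 * θ) * Y := by ring
      rw [e2, e1, hY, rpow_split_one ha0]
      field_simp
      try ring
    linarith

lemma key_ineq {E : Type*} [NormedAddCommGroup E] [InnerProductSpace ℝ E]
    {s : ℝ} (hs2 : 2 ≤ s) (hs3 : s ≤ 3) (u v : E) :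
    ‖u + v‖ ^ s ≤ ‖u‖ ^ s + s * ‖u‖ ^ (s - 2) * (inner ℝ u v : ℝ)
      + s * (s - 1) / 2 * (‖u‖ ^ (s - 2) * ‖v‖ ^ 2 + ‖v‖ ^ s) := by
  have h1 : ‖u + v‖ ^ s = (‖u‖ ^ 2 + 2 * (inner ℝ u v : ℝ) + ‖v‖ ^ 2) ^ (s / 2) := by
    rw [← sq_rpow_half (norm_nonneg (u + v)) s, norm_add_sq_real]
  rw [h1]
  exact scalar_main hs2 hs3 (norm_nonneg u) (norm_nonneg v) (abs_real_inner_le_norm u v)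
lemma integral_rpow_le_rpow {Ω : Type*} [MeasurableSpace Ω] {P : Measure Ω}
    [IsProbabilityMeasure P] {X : Ω → ℝ} (hX : ∀ ω, 0 ≤ X ω)
    (hXm : AEStronglyMeasurable X P) {p s : ℝ} (hp : 0 < p) (hps : p ≤ s)
    (hXs : Integrable (fun ω => X ω ^ s) P) :
    ∫ ω, X ω ^ p ∂P ≤ (∫ ω, X ω ^ s ∂P) ^ (p / s) := by
  have hs : (0:ℝ) < s := lt_of_lt_of_le hp hps
  have key : ∀ r : ℝ, 0 < r →
      ∫ ω, X ω ^ r ∂P = (∫⁻ ω, (ENNReal.ofReal (X ω)) ^ r ∂P).toReal := by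
    intro r hr
    rw [integral_eq_lintegral_of_nonneg_ae
      (Filter.Eventually.of_forall fun ω => Real.rpow_nonneg (hX ω) r)
      ((Real.continuous_rpow_const hr.le).comp_aestronglyMeasurable hXm)]
    congr 1
    apply lintegral_congr
    intro ω
    rw [← ENNReal.ofReal_rpow_of_nonneg (hX ω) hr.le]
  have hel : ∀ r : ℝ, 0 < r → eLpNorm X (ENNReal.ofReal r) P
      = (∫⁻ ω, (ENNReal.ofReal (X ω)) ^ r ∂P) ^ (1 / r) := by
    intro r hr
    rw [eLpNorm_eq_lintegral_rpow_enorm_toReal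
      (by simp [ENNReal.ofReal_eq_zero, not_le, hr]) ENNReal.ofReal_ne_top,
      ENNReal.toReal_ofReal hr.le]
    congr 1
    apply lintegral_congr
    intro ω
    congr 1
    rw [← ofReal_norm, Real.norm_of_nonneg (hX ω)]
  have hmono := eLpNorm_le_eLpNorm_of_exponent_le (μ := P) (f := X)
    (ENNReal.ofReal_le_ofReal hps) hXm
  rw [hel p hp, hel s hs] at hmono
  have h2 : (∫⁻ ω, (ENNReal.ofReal (X ω)) ^ p ∂P)
      ≤ (∫⁻ ω, (ENNReal.ofReal (X ω)) ^ s ∂P) ^ (p / s) := by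
    have h3 := ENNReal.rpow_le_rpow hmono (le_of_lt hp)
    rw [← ENNReal.rpow_mul, ← ENNReal.rpow_mul] at h3
    rw [show 1 / p * p = 1 by field_simp, show 1 / s * p = p / s by field_simp] at h3
    rwa [ENNReal.rpow_one] at h3
  have hLs_top : (∫⁻ ω, (ENNReal.ofReal (X ω)) ^ s ∂P) ≠ ⊤ := by
    have h4 := (hasFiniteIntegral_iff_ofReal
      (Filter.Eventually.of_forall fun ω => Real.rpow_nonneg (hX ω) s)).mp hXs.2
    have h5 : (∫⁻ ω, ENNReal.ofReal (X ω ^ s) ∂P)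
        = ∫⁻ ω, (ENNReal.ofReal (X ω)) ^ s ∂P := by
      apply lintegral_congr
      intro ω
      rw [← ENNReal.ofReal_rpow_of_nonneg (hX ω) hs.le]
    rw [h5] at h4
    exact ne_of_lt h4
  rw [key p hp, key s hs, ENNReal.toReal_rpow]
  exact ENNReal.toReal_mono
    (ENNReal.rpow_ne_top_of_nonneg (by positivity) hLs_top) h2
end EulerAux

set_option maxHeartbeats 4000000 in
open EulerAux in
/-- `L^p`-Lipschitz property of the Euler operator for `p ∈ (1,2)`, with `s = p + 1`:
`E|E_k(x,Z) − E_k(x',Z)|^p ≤ |x−x'|^p exp(Δ(c_s^{(1)} + s[b]_Lip + c^{(2)}_{s,Δmax}[σ]_Lip^s E|Z|^s))`,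
and in particular `E_k(·,Z)` is `L^p`-Lipschitz with constant `exp(Δ(⋯)/p)`. -/
theorem euler_Lp_lipschitz_of_lt_two (d q : ℕ) (T Δmax : ℝ) (n : ℕ) (hn : 0 < n) (hT : 0 < T)
    (hΔmax : 0 < Δmax) (hΔ : T / n < Δmax) (p : ℝ) (hp1 : 1 < p) (hp2 : p < 2)
    (b : ℝ → Euc d → Euc d) (σ : ℝ → Euc d → (Euc q →L[ℝ] Euc d)) (Lb Lσ : ℝ)
    (hLb : 0 ≤ Lb) (hLσ : 0 ≤ Lσ)
    (hb : ∀ t x y, ‖b t x - b t y‖ ≤ Lb * ‖x - y‖)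
    (hσ : ∀ t x y, ‖σ t x - σ t y‖ ≤ Lσ * ‖x - y‖)
    (Ω : Type*) [MeasurableSpace Ω] (P : Measure Ω) [IsProbabilityMeasure P]
    (Z : Ω → Euc q) (hZm : Measurable Z) (hZ1 : Integrable Z P)
    (hZ0 : (∫ ω, Z ω ∂P) = 0) (hZs : Integrable (fun ω => ‖Z ω‖ ^ (p + 1)) P)
    (x x' : Euc d) (k : ℕ) :
    (∫ ω, ‖euler (T / n) b σ ((k : ℝ) * (T / n)) x (Z ω)
          - euler (T / n) b σ ((k : ℝ) * (T / n)) x' (Z ω)‖ ^ p ∂P)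
        ≤ ‖x - x'‖ ^ p
          * Real.exp ((T / n) * (c₁ (p + 1) + (p + 1) * Lb
              + c₂ (p + 1) Δmax * Lσ ^ (p + 1) * ∫ ω, ‖Z ω‖ ^ (p + 1) ∂P))
      ∧ (∫ ω, ‖euler (T / n) b σ ((k : ℝ) * (T / n)) x (Z ω)
          - euler (T / n) b σ ((k : ℝ) * (T / n)) x' (Z ω)‖ ^ p ∂P) ^ (1 / p)
        ≤ Real.exp ((T / n) * (c₁ (p + 1) + (p + 1) * Lb
              + c₂ (p + 1) Δmax * Lσ ^ (p + 1) * ∫ ω, ‖Z ω‖ ^ (p + 1) ∂P) / p)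
          * ‖x - x'‖ := by
  have hn' : (0:ℝ) < n := by exact_mod_cast hn
  have hΔ0 : 0 < T / n := div_pos hT hn'
  set Δ : ℝ := T / n with hΔdef
  set s : ℝ := p + 1 with hsdef
  have hs2 : 2 ≤ s := by rw [hsdef]; linarith
  have hs3 : s ≤ 3 := by rw [hsdef]; linarith
  have hp0 : (0:ℝ) < p := by linarith
  have hs0 : (0:ℝ) < s := by rw [hsdef]; linarith
  set tk : ℝ := (k : ℝ) * Δ with htk
  set D : Euc d := x - x' with hD
  set Bd : Euc d := b tk x - b tk x' with hBd
  set U : Euc d := D + Δ • Bd with hU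
  set Tσ : Euc q →L[ℝ] Euc d := σ tk x - σ tk x' with hTσ
  set V : Ω → Euc d := fun ω => Real.sqrt Δ • (Tσ (Z ω)) with hV
  set L : ℝ := Lσ * ‖D‖ with hL
  set M : ℝ := ∫ ω, ‖Z ω‖ ^ s ∂P with hM
  set C : ℝ := c₁ s + s * Lb + c₂ s Δmax * Lσ ^ s * M with hC
  have hWeq : ∀ ω : Ω, euler Δ b σ tk x (Z ω) - euler Δ b σ tk x' (Z ω) = U + V ω := by
    intro ω
    simp only [hU, hV, hTσ, hD, hBd, euler, ContinuousLinearMap.sub_apply, smul_sub]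
    abel
  have hc1e : c₁ s = (s - 1) * (s - 2) / 2 := by
    simp only [c₁, max_eq_right (show s - 3 ≤ (0:ℝ) by linarith), Real.rpow_zero, one_mul]
  have hc2e : c₂ s Δmax = (s - 1) * (1 + s / 2 * Δmax ^ (s / 2 - 1)) := by
    simp only [c₂, max_eq_right (show s - 3 ≤ (0:ℝ) by linarith), Real.rpow_zero, one_mul]
  have hc10 : 0 ≤ c₁ s := by rw [hc1e]; nlinarith
  have hΔme : 0 ≤ Δmax ^ (s / 2 - 1) := Real.rpow_nonneg hΔmax.le _
  have hc20 : 0 ≤ c₂ s Δmax := by rw [hc2e]; nlinarith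
  have hM0 : 0 ≤ M := by
    rw [hM]; exact integral_nonneg fun ω => Real.rpow_nonneg (norm_nonneg _) _
  have hL0 : 0 ≤ L := by rw [hL]; positivity
  have hLσs : 0 ≤ Lσ ^ s := Real.rpow_nonneg hLσ _
  have hC0 : 0 ≤ C := by
    rw [hC]
    have h2 : 0 ≤ s * Lb := mul_nonneg hs0.le hLb
    nlinarith [mul_nonneg (mul_nonneg hc20 hLσs) hM0]
  have hTb : ‖Tσ‖ ≤ L := by rw [hTσ, hL, hD]; exact hσ tk x x'
  have hVb : ∀ ω, ‖V ω‖ ≤ Real.sqrt Δ * (L * ‖Z ω‖) := by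
    intro ω
    have hVω : V ω = Real.sqrt Δ • (Tσ (Z ω)) := by rw [hV]
    rw [hVω, norm_smul, Real.norm_eq_abs, abs_of_nonneg (Real.sqrt_nonneg Δ)]
    have h1 : ‖Tσ (Z ω)‖ ≤ L * ‖Z ω‖ :=
      (Tσ.le_opNorm (Z ω)).trans (mul_le_mul_of_nonneg_right hTb (norm_nonneg _))
    exact mul_le_mul_of_nonneg_left h1 (Real.sqrt_nonneg Δ)
  set Φ : Euc q →L[ℝ] ℝ := (innerSL ℝ U).comp ((Real.sqrt Δ) • Tσ) with hΦ
  have hΦeq : ∀ ω, Φ (Z ω) = (inner ℝ U (V ω) : ℝ) := by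
    intro ω
    have hVω : V ω = Real.sqrt Δ • (Tσ (Z ω)) := by rw [hV]
    rw [hΦ, hVω]
    simp only [ContinuousLinearMap.comp_apply, ContinuousLinearMap.smul_apply,
      innerSL_apply_apply, inner_smul_right]
  have hKnn : (0:ℝ) ≤ s * (s - 1) / 2 := by nlinarith
  have step1 : ∀ ω, ‖U + V ω‖ ^ s
      ≤ (1 + Δ * c₁ s) * ‖U‖ ^ s + s * ‖U‖ ^ (s - 2) * Φ (Z ω)
        + Δ * (c₂ s Δmax * (L ^ s * ‖Z ω‖ ^ s)) := by
    intro ω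
    rw [hΦeq ω]
    have hkey := key_ineq hs2 hs3 U (V ω)
    have hZn : (0:ℝ) ≤ ‖Z ω‖ := norm_nonneg _
    have hLZ : (0:ℝ) ≤ L * ‖Z ω‖ := mul_nonneg hL0 hZn
    have hV2 : ‖V ω‖ ^ 2 ≤ Δ * (L * ‖Z ω‖) ^ 2 := by
      have h2 : ‖V ω‖ ^ 2 ≤ (Real.sqrt Δ * (L * ‖Z ω‖)) ^ 2 :=
        pow_le_pow_left₀ (norm_nonneg _) (hVb ω) 2
      have h3 : (Real.sqrt Δ * (L * ‖Z ω‖)) ^ 2 = Δ * (L * ‖Z ω‖) ^ 2 := by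
        rw [mul_pow, Real.sq_sqrt hΔ0.le]
      linarith
    have hUnn : (0:ℝ) ≤ ‖U‖ ^ (s - 2) := Real.rpow_nonneg (norm_nonneg _) _
    have hy := young hs2 (norm_nonneg U) hLZ
    have hmulLZ : (L * ‖Z ω‖) ^ s = L ^ s * ‖Z ω‖ ^ s := Real.mul_rpow hL0 hZn
    have hq : s * (s - 1) / 2 * (‖U‖ ^ (s - 2) * ‖V ω‖ ^ 2)
        ≤ Δ * (c₁ s * ‖U‖ ^ s) + Δ * ((s - 1) * (L ^ s * ‖Z ω‖ ^ s)) := by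
      have c1 : ‖U‖ ^ (s - 2) * ‖V ω‖ ^ 2 ≤ Δ * (‖U‖ ^ (s - 2) * (L * ‖Z ω‖) ^ 2) := by
        have := mul_le_mul_of_nonneg_left hV2 hUnn
        nlinarith
      have c3 : s * (s - 1) / 2 * (‖U‖ ^ (s - 2) * ‖V ω‖ ^ 2)
          ≤ s * (s - 1) / 2 * (Δ * ((s - 2) / s * ‖U‖ ^ s + 2 / s * (L * ‖Z ω‖) ^ s)) := by
        apply mul_le_mul_of_nonneg_left _ hKnn
        exact c1.trans (mul_le_mul_of_nonneg_left hy hΔ0.le)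
      have c4 : s * (s - 1) / 2 * (Δ * ((s - 2) / s * ‖U‖ ^ s + 2 / s * (L * ‖Z ω‖) ^ s))
          = Δ * (c₁ s * ‖U‖ ^ s) + Δ * ((s - 1) * (L ^ s * ‖Z ω‖ ^ s)) := by
        rw [hmulLZ, hc1e]
        field_simp
      linarith
    have hvs : s * (s - 1) / 2 * ‖V ω‖ ^ s
        ≤ Δ * ((s - 1) * (s / 2 * Δmax ^ (s / 2 - 1)) * (L ^ s * ‖Z ω‖ ^ s)) := by
      have h1 : ‖V ω‖ ^ s ≤ (Real.sqrt Δ * (L * ‖Z ω‖)) ^ s :=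
        Real.rpow_le_rpow (norm_nonneg _) (hVb ω) hs0.le
      have h2 : (Real.sqrt Δ * (L * ‖Z ω‖)) ^ s = Δ ^ (s / 2) * (L ^ s * ‖Z ω‖ ^ s) := by
        rw [Real.mul_rpow (Real.sqrt_nonneg _) hLZ, hmulLZ, Real.sqrt_eq_rpow,
          ← Real.rpow_mul hΔ0.le, show (1 / 2 : ℝ) * s = s / 2 by ring]
      have h3 : Δ ^ (s / 2) ≤ Δ * Δmax ^ (s / 2 - 1) := by
        have e : Δ ^ (s / 2) = Δ * Δ ^ (s / 2 - 1) := by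
          rw [show Δ * Δ ^ (s / 2 - 1) = Δ ^ (1:ℝ) * Δ ^ (s / 2 - 1) by rw [Real.rpow_one],
            ← Real.rpow_add hΔ0]
          congr 1
          ring
        rw [e]
        exact mul_le_mul_of_nonneg_left
          (Real.rpow_le_rpow hΔ0.le hΔ.le (by linarith)) hΔ0.le
      have h6 : ‖V ω‖ ^ s ≤ Δ * Δmax ^ (s / 2 - 1) * (L ^ s * ‖Z ω‖ ^ s) := by
        calc ‖V ω‖ ^ s ≤ Δ ^ (s / 2) * (L ^ s * ‖Z ω‖ ^ s) := h1.trans_eq h2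
          _ ≤ Δ * Δmax ^ (s / 2 - 1) * (L ^ s * ‖Z ω‖ ^ s) := by
              apply mul_le_mul_of_nonneg_right h3
              exact mul_nonneg (Real.rpow_nonneg hL0 _) (Real.rpow_nonneg hZn _)
      calc s * (s - 1) / 2 * ‖V ω‖ ^ s
          ≤ s * (s - 1) / 2 * (Δ * Δmax ^ (s / 2 - 1) * (L ^ s * ‖Z ω‖ ^ s)) :=
            mul_le_mul_of_nonneg_left h6 hKnn
        _ = Δ * ((s - 1) * (s / 2 * Δmax ^ (s / 2 - 1)) * (L ^ s * ‖Z ω‖ ^ s)) := by ring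
    have hsplit : Δ * (c₂ s Δmax * (L ^ s * ‖Z ω‖ ^ s))
        = Δ * ((s - 1) * (L ^ s * ‖Z ω‖ ^ s))
          + Δ * ((s - 1) * (s / 2 * Δmax ^ (s / 2 - 1)) * (L ^ s * ‖Z ω‖ ^ s)) := by
      rw [hc2e]; ring
    rw [hsplit]
    nlinarith [hkey, hq, hvs]
  have hΦint : Integrable (fun ω => Φ (Z ω)) P := Φ.integrable_comp hZ1
  have hΦ0 : ∫ ω, Φ (Z ω) ∂P = 0 := by
    rw [ContinuousLinearMap.integral_comp_comm Φ hZ1, hZ0, map_zero]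
  have hWsm : AEStronglyMeasurable (fun ω => ‖U + V ω‖ ^ s) P := by
    have hcont : Continuous fun z : Euc q => ‖U + Real.sqrt Δ • (Tσ z)‖ ^ s := by
      apply Continuous.rpow_const
      · exact (continuous_const.add ((Tσ.continuous).const_smul (Real.sqrt Δ))).norm
      · exact fun z => Or.inr hs0.le
    have h := hcont.comp_aestronglyMeasurable (hZm.aestronglyMeasurable (μ := P))
    simpa [hV] using h
  have hWint : Integrable (fun ω => ‖U + V ω‖ ^ s) P := by
    have hmaj : Integrable (fun ω =>
        2 ^ s * ‖U‖ ^ s + 2 ^ s * (Real.sqrt Δ * L) ^ s * ‖Z ω‖ ^ s) P :=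
      (integrable_const _).add (hZs.const_mul _)
    apply Integrable.mono' hmaj hWsm
    apply Filter.Eventually.of_forall
    intro ω
    rw [Real.norm_of_nonneg (Real.rpow_nonneg (norm_nonneg _) _)]
    have hZn : (0:ℝ) ≤ ‖Z ω‖ := norm_nonneg _
    have hLZ : (0:ℝ) ≤ L * ‖Z ω‖ := mul_nonneg hL0 hZn
    have h1 : ‖U + V ω‖ ≤ ‖U‖ + Real.sqrt Δ * (L * ‖Z ω‖) :=
      (norm_add_le _ _).trans (by linarith [hVb ω])
    have h2 : ‖U + V ω‖ ^ s ≤ (‖U‖ + Real.sqrt Δ * (L * ‖Z ω‖)) ^ s :=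
      Real.rpow_le_rpow (norm_nonneg _) h1 hs0.le
    have h3 := two_rpow_bound (norm_nonneg U)
      (mul_nonneg (Real.sqrt_nonneg Δ) hLZ) hs0.le
    have h4 : (Real.sqrt Δ * (L * ‖Z ω‖)) ^ s = (Real.sqrt Δ * L) ^ s * ‖Z ω‖ ^ s := by
      rw [show Real.sqrt Δ * (L * ‖Z ω‖) = (Real.sqrt Δ * L) * ‖Z ω‖ by ring,
        Real.mul_rpow (mul_nonneg (Real.sqrt_nonneg Δ) hL0) hZn]
    rw [h4] at h3
    linarith [h2, h3]
  have hRHSint1 : Integrable (fun ω =>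
      (1 + Δ * c₁ s) * ‖U‖ ^ s + s * ‖U‖ ^ (s - 2) * Φ (Z ω)) P :=
    (integrable_const _).add (hΦint.const_mul _)
  have hRHSint2 : Integrable (fun ω => Δ * (c₂ s Δmax * (L ^ s * ‖Z ω‖ ^ s))) P :=
    (((hZs.const_mul _).const_mul _).const_mul _)
  have hIs : ∫ ω, ‖U + V ω‖ ^ s ∂P
      ≤ (1 + Δ * c₁ s) * ‖U‖ ^ s + Δ * (c₂ s Δmax * (L ^ s * M)) := by
    have h := integral_mono hWint (hRHSint1.add hRHSint2) (fun ω => step1 ω)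
    simp only [Pi.add_apply] at h
    rw [integral_add hRHSint1 hRHSint2,
      integral_add (integrable_const _) (hΦint.const_mul _),
      integral_const, integral_const_mul, integral_const_mul, integral_const_mul,
      integral_const_mul, hΦ0, mul_zero, add_zero] at h
    simp only [measure_univ, probReal_univ, ENNReal.toReal_one, smul_eq_mul, one_mul] at h
    rw [← hM] at h
    exact h
  have hUb : ‖U‖ ≤ (1 + Δ * Lb) * ‖D‖ := by
    have h1 : ‖U‖ ≤ ‖D‖ + ‖Δ • Bd‖ := by rw [hU]; exact norm_add_le _ _
    have h2 : ‖Δ • Bd‖ = Δ * ‖Bd‖ := by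
      rw [norm_smul, Real.norm_eq_abs, abs_of_nonneg hΔ0.le]
    have h3 : ‖Bd‖ ≤ Lb * ‖D‖ := by rw [hBd, hD]; exact hb tk x x'
    nlinarith [mul_le_mul_of_nonneg_left h3 hΔ0.le]
  have hUs : ‖U‖ ^ s ≤ (1 + Δ * Lb) ^ s * ‖D‖ ^ s := by
    rw [← Real.mul_rpow (by positivity) (norm_nonneg _)]
    exact Real.rpow_le_rpow (norm_nonneg _) hUb hs0.le
  have hLse : L ^ s = Lσ ^ s * ‖D‖ ^ s := by
    rw [hL]; exact Real.mul_rpow hLσ (norm_nonneg _)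
  have hfinalS : ∫ ω, ‖U + V ω‖ ^ s ∂P ≤ ‖D‖ ^ s * Real.exp (Δ * C) := by
    have hq1 : (1 + Δ * c₁ s) * ‖U‖ ^ s
        ≤ (1 + Δ * c₁ s) * ((1 + Δ * Lb) ^ s * ‖D‖ ^ s) :=
      mul_le_mul_of_nonneg_left hUs (by positivity)
    have e1 : (1:ℝ) + Δ * Lb ≤ Real.exp (Δ * Lb) := by
      have := Real.add_one_le_exp (Δ * Lb); linarith
    have e2 : (1 + Δ * Lb) ^ s ≤ Real.exp (Δ * Lb * s) := by
      calc (1 + Δ * Lb) ^ s ≤ (Real.exp (Δ * Lb)) ^ s :=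
            Real.rpow_le_rpow (by positivity) e1 hs0.le
        _ = Real.exp (Δ * Lb * s) := (Real.exp_mul _ _).symm
    have e3 : 1 + Δ * c₁ s ≤ Real.exp (Δ * c₁ s) := by
      have := Real.add_one_le_exp (Δ * c₁ s); linarith
    have e5 : 1 + Δ * (c₂ s Δmax * (Lσ ^ s * M))
        ≤ Real.exp (Δ * (c₂ s Δmax * (Lσ ^ s * M))) := by
      have := Real.add_one_le_exp (Δ * (c₂ s Δmax * (Lσ ^ s * M))); linarith
    have e6 : Real.exp (Δ * c₁ s + Δ * Lb * s) * Real.exp (Δ * (c₂ s Δmax * (Lσ ^ s * M)))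
        = Real.exp (Δ * C) := by
      rw [← Real.exp_add, hC]; congr 1; ring
    have e7 : (1:ℝ) ≤ Real.exp (Δ * c₁ s + Δ * Lb * s) := by
      have h := Real.add_one_le_exp (Δ * c₁ s + Δ * Lb * s)
      have h0 : 0 ≤ Δ * c₁ s + Δ * Lb * s :=
        add_nonneg (mul_nonneg hΔ0.le hc10)
          (mul_nonneg (mul_nonneg hΔ0.le hLb) hs0.le)
      linarith
    have hA3 : 0 ≤ Δ * (c₂ s Δmax * (Lσ ^ s * M)) :=
      mul_nonneg hΔ0.le (mul_nonneg hc20 (mul_nonneg hLσs hM0))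
    have hprod1 : (1 + Δ * c₁ s) * (1 + Δ * Lb) ^ s
        ≤ Real.exp (Δ * c₁ s) * Real.exp (Δ * Lb * s) :=
      mul_le_mul e3 e2 (by positivity) (Real.exp_pos _).le
    have hprod2 : Real.exp (Δ * c₁ s + Δ * Lb * s) * (1 + Δ * (c₂ s Δmax * (Lσ ^ s * M)))
        ≤ Real.exp (Δ * c₁ s + Δ * Lb * s) * Real.exp (Δ * (c₂ s Δmax * (Lσ ^ s * M))) :=
      mul_le_mul_of_nonneg_left e5 (Real.exp_pos _).le
    have e4 : Real.exp (Δ * c₁ s) * Real.exp (Δ * Lb * s)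
        = Real.exp (Δ * c₁ s + Δ * Lb * s) := (Real.exp_add _ _).symm
    calc ∫ ω, ‖U + V ω‖ ^ s ∂P
        ≤ (1 + Δ * c₁ s) * ‖U‖ ^ s + Δ * (c₂ s Δmax * (L ^ s * M)) := hIs
      _ = (1 + Δ * c₁ s) * ‖U‖ ^ s + Δ * (c₂ s Δmax * (Lσ ^ s * M)) * ‖D‖ ^ s := by
          rw [hLse]; ring
      _ ≤ (1 + Δ * c₁ s) * ((1 + Δ * Lb) ^ s * ‖D‖ ^ s)
          + Δ * (c₂ s Δmax * (Lσ ^ s * M)) * ‖D‖ ^ s := by linarith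
      _ = ((1 + Δ * c₁ s) * (1 + Δ * Lb) ^ s + Δ * (c₂ s Δmax * (Lσ ^ s * M))) * ‖D‖ ^ s := by
          ring
      _ ≤ Real.exp (Δ * C) * ‖D‖ ^ s := by
          apply mul_le_mul_of_nonneg_right _ (Real.rpow_nonneg (norm_nonneg _) _)
          have hmix : 0 ≤ (Real.exp (Δ * c₁ s + Δ * Lb * s) - 1)
              * (Δ * (c₂ s Δmax * (Lσ ^ s * M))) :=
            mul_nonneg (by linarith) hA3
          linarith [hprod1, hprod2, e4, e6, hmix]
      _ = ‖D‖ ^ s * Real.exp (Δ * C) := mul_comm _ _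
  have hIs0 : 0 ≤ ∫ ω, ‖U + V ω‖ ^ s ∂P :=
    integral_nonneg fun ω => Real.rpow_nonneg (norm_nonneg _) _
  have hXm' : AEStronglyMeasurable (fun ω => ‖U + V ω‖) P := by
    have hcont : Continuous fun z : Euc q => ‖U + Real.sqrt Δ • (Tσ z)‖ :=
      (continuous_const.add ((Tσ.continuous).const_smul (Real.sqrt Δ))).norm
    have h := hcont.comp_aestronglyMeasurable (hZm.aestronglyMeasurable (μ := P))
    simpa [hV] using h
  have hJ : ∫ ω, ‖U + V ω‖ ^ p ∂P ≤ (∫ ω, ‖U + V ω‖ ^ s ∂P) ^ (p / s) :=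
    integral_rpow_le_rpow (fun ω => norm_nonneg _) hXm' hp0 (by rw [hsdef]; linarith) hWint
  have hpow : (‖D‖ ^ s * Real.exp (Δ * C)) ^ (p / s)
      = ‖D‖ ^ p * Real.exp (Δ * C * (p / s)) := by
    rw [Real.mul_rpow (Real.rpow_nonneg (norm_nonneg _) _) (Real.exp_pos _).le,
      ← Real.rpow_mul (norm_nonneg _), show s * (p / s) = p by field_simp,
      ← Real.exp_mul]
  have hmain : ∫ ω, ‖U + V ω‖ ^ p ∂P ≤ ‖D‖ ^ p * Real.exp (Δ * C) := by
    have h7 : (∫ ω, ‖U + V ω‖ ^ s ∂P) ^ (p / s) ≤ (‖D‖ ^ s * Real.exp (Δ * C)) ^ (p / s) :=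
      Real.rpow_le_rpow hIs0 hfinalS (by positivity)
    have h9 : Real.exp (Δ * C * (p / s)) ≤ Real.exp (Δ * C) := by
      apply Real.exp_le_exp.2
      have hps1 : p / s ≤ 1 := by rw [div_le_one hs0]; rw [hsdef]; linarith
      have hh := mul_nonneg (mul_nonneg hΔ0.le hC0) (sub_nonneg.2 hps1)
      nlinarith [hh]
    calc ∫ ω, ‖U + V ω‖ ^ p ∂P ≤ (∫ ω, ‖U + V ω‖ ^ s ∂P) ^ (p / s) := hJ
      _ ≤ (‖D‖ ^ s * Real.exp (Δ * C)) ^ (p / s) := h7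
      _ = ‖D‖ ^ p * Real.exp (Δ * C * (p / s)) := hpow
      _ ≤ ‖D‖ ^ p * Real.exp (Δ * C) :=
          mul_le_mul_of_nonneg_left h9 (Real.rpow_nonneg (norm_nonneg _) _)
  have hIp0 : 0 ≤ ∫ ω, ‖U + V ω‖ ^ p ∂P :=
    integral_nonneg fun ω => Real.rpow_nonneg (norm_nonneg _) _
  simp only [hWeq]
  constructor
  · exact hmain
  · have h10 := Real.rpow_le_rpow hIp0 hmain (by positivity : (0:ℝ) ≤ 1 / p)
    rw [Real.mul_rpow (Real.rpow_nonneg (norm_nonneg _) _) (Real.exp_pos _).le,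
      ← Real.rpow_mul (norm_nonneg _), show p * (1 / p) = 1 by field_simp, Real.rpow_one,
      ← Real.exp_mul, show Δ * C * (1 / p) = Δ * C / p by ring] at h10
    rw [mul_comm (Real.exp (Δ * C / p)) ‖D‖] at *
    linarith [h10]
end
end
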